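/- arXiv:1510.08956 — 3 statements merged into one kernel-verified Lean document; each statement's English description precedes it below -/
import Mathlib

section
/- Let x⁽¹⁾,…,x⁽ⁿ⁾ and y⁽¹⁾,…,y⁽ⁿ⁾ be points in ℝ^d all contained in the Euclidean ball of radius R, with empirical measures X̂⁽ⁿ⁾ := (1/n)Σᵢ δ_{x⁽ⁱ⁾} and Ŷ⁽ⁿ⁾ := (1/n)Σⱼ δ_{y⁽ʲ⁾}. If α, β ∈ B satisfy ‖α − β‖₂ < ε, then |D(αᵀX̂⁽ⁿ⁾, αᵀŶ⁽ⁿ⁾) − D(βᵀX̂⁽ⁿ⁾, βᵀŶ⁽ⁿ⁾)| ≤ 8·ε·R². -/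
open MeasureTheory ProbabilityTheory
open scoped RealInnerProductSpace ENNReal

noncomputable section

/-- Squared 2-Wasserstein distance between Borel probability measures on ℝ. -/
def sqW2 (P Q : Measure ℝ) : ℝ :=
  sInf {r : ℝ | ∃ π : Measure (ℝ × ℝ), IsProbabilityMeasure π ∧
    π.fst = P ∧ π.snd = Q ∧ r = ∫ p : ℝ × ℝ, (p.1 - p.2) ^ 2 ∂π}

/-- 1-Wasserstein distance. -/
def W1 (P Q : Measure ℝ) : ℝ :=
  sInf {r : ℝ | ∃ π : Measure (ℝ × ℝ), IsProbabilityMeasure π ∧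
    π.fst = P ∧ π.snd = Q ∧ r = ∫ p : ℝ × ℝ, |p.1 - p.2| ∂π}

/-- Pushforward of a measure on ℝ^d under the projection x ↦ βᵀx. -/
def proj {d : ℕ} (β : EuclideanSpace ℝ (Fin d)) (μ : Measure (EuclideanSpace ℝ (Fin d))) :
    Measure ℝ := μ.map (fun x => ⟪β, x⟫)

/-- Empirical measure of a finite tuple of points. -/
def emp {α : Type*} [MeasurableSpace α] {n : ℕ} (xs : Fin n → α) : Measure α :=
  (n : ℝ≥0∞)⁻¹ • ∑ i, Measure.dirac (xs i)

/-- The feasible set B = {β : ‖β‖₂ ≤ 1, β₁ ≥ 0}. -/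
def ballB (d : ℕ) (hd : 0 < d) : Set (EuclideanSpace ℝ (Fin d)) :=
  {β | ‖β‖ ≤ 1 ∧ 0 ≤ β ⟨0, hd⟩}

/-- μ admits a continuous density supported in (and nonzero on) the Euclidean ball of radius R. -/
def HasContDensityBall {d : ℕ} (R : ℝ) (μ : Measure (EuclideanSpace ℝ (Fin d))) : Prop :=
  ∃ f : EuclideanSpace ℝ (Fin d) → ℝ, Continuous f ∧ (∀ x, 0 ≤ f x) ∧
    (∀ x, 0 < f x ↔ x ∈ Metric.ball (0 : EuclideanSpace ℝ (Fin d)) R) ∧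
    μ = volume.withDensity (fun x => ENNReal.ofReal (f x))

/-- Cumulative distribution function of a measure on ℝ. -/
def mcdf (μ : Measure ℝ) (z : ℝ) : ℝ := (μ (Set.Iic z)).toReal

/-- Quantile function. -/
def quant (μ : Measure ℝ) (p : ℝ) : ℝ := sInf {x : ℝ | p ≤ mcdf μ x}

/-- Kolmogorov distance. -/
def kolm (P Q : Measure ℝ) : ℝ := ⨆ z : ℝ, |mcdf P z - mcdf Q z|

/-- Lévy distance. -/
def levy (P Q : Measure ℝ) : ℝ :=
  sInf {ε : ℝ | 0 < ε ∧ ∀ x : ℝ, mcdf Q (x - ε) - ε ≤ mcdf P x ∧ mcdf P x ≤ mcdf Q (x + ε) + ε}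

/-- Lévy–Prokhorov distance. -/
def prokh (P Q : Measure ℝ) : ℝ :=
  sInf {ε : ℝ | 0 < ε ∧ ∀ A : Set ℝ, MeasurableSet A →
    (P A).toReal ≤ (Q (Metric.thickening ε A)).toReal + ε ∧
    (Q A).toReal ≤ (P (Metric.thickening ε A)).toReal + ε}

/-- i.i.d. samples with a given law. -/
def IIDSamples {Ω α ι : Type*} [MeasurableSpace Ω] [MeasurableSpace α]
    (P : Measure Ω) (Zs : ι → Ω → α) (law : Measure α) : Prop :=
  iIndepFun Zs P ∧
    ∀ i, Measurable (Zs i) ∧ P.map (Zs i) = law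

/-- Supremum of densities of projections of ν along directions in B. -/
def projDensitySup {d : ℕ} (hd : 0 < d) (ν : Measure (EuclideanSpace ℝ (Fin d))) : ℝ :=
  sSup {z : ℝ | ∃ α ∈ ballB d hd, ∃ y : ℝ, z = ((proj α ν).rnDeriv volume y).toReal}

/-- ℓ¹ norm of the covariance matrix of X. -/
def covL1 {Ω : Type*} [MeasurableSpace Ω] (P : Measure Ω) {d : ℕ}
    (X : Ω → EuclideanSpace ℝ (Fin d)) : ℝ :=
  ∑ i, ∑ j, |(∫ ω, X ω i * X ω j ∂P) - (∫ ω, X ω i ∂P) * (∫ ω, X ω j ∂P)|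

/-- T_a(X,Y). -/
def Ta {Ω : Type*} [MeasurableSpace Ω] (P : Measure Ω) {d : ℕ}
    (X Y : Ω → EuclideanSpace ℝ (Fin d)) (a : ℝ) : ℝ :=
  |(P {ω | ∀ i, |X ω i| ≤ a}).toReal - (P {ω | ∀ i, |Y ω i| ≤ a}).toReal|

section Aux
open Finset

-- auxiliary lemmas
lemma measure_coe_finset {X : Type*} [MeasurableSpace X] [MeasurableSingletonClass X]
    (μ : Measure X) (s : Finset X) : μ ↑s = ∑ p ∈ s, μ {p} := by
  have : (↑s : Set X) = ⋃ p ∈ s, ({p} : Set X) := by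
    rw [← Finset.set_biUnion_coe, Set.biUnion_of_singleton]
  rw [this, measure_biUnion_finset ?_ (fun _ _ => measurableSet_singleton _)]
  intro a _ b _ hab
  simp [Set.disjoint_singleton, hab]

lemma meas_eq_sum_dirac {X : Type*} [MeasurableSpace X] [MeasurableSingletonClass X]
    (μ : Measure X) (T : Finset X) (h : μ ((↑T : Set X)ᶜ) = 0) :
    μ = ∑ p ∈ T, μ {p} • Measure.dirac p := by
  classical
  ext E hE
  have h1 : μ E = μ (E ∩ ↑T) := by
    refine le_antisymm ?_ (measure_mono Set.inter_subset_left)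
    calc μ E ≤ μ ((E ∩ ↑T) ∪ (↑T : Set X)ᶜ) := measure_mono (by
            intro z hz; by_cases hzT : z ∈ (↑T : Set X) <;> simp [hz, hzT])
      _ ≤ μ (E ∩ ↑T) + μ ((↑T : Set X)ᶜ) := measure_union_le _ _
      _ = μ (E ∩ ↑T) := by rw [h, add_zero]
  have h2 : (E ∩ ↑T : Set X) = ↑(T.filter (· ∈ E)) := by ext p; simp [and_comm]
  rw [h1, h2, measure_coe_finset, Measure.finset_sum_apply, Finset.sum_filter]
  refine Finset.sum_congr rfl fun p _ => ?_
  rw [Measure.smul_apply, Measure.dirac_apply' _ hE, Set.indicator_apply, smul_eq_mul]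
  by_cases hp : p ∈ E <;> simp [hp]

lemma integrable_dirac' {X : Type*} [MeasurableSpace X] {f : X → ℝ}
    (hf : StronglyMeasurable f) (p : X) : Integrable f (Measure.dirac p) := by
  refine ⟨hf.aestronglyMeasurable, ?_⟩
  rw [HasFiniteIntegral, lintegral_dirac' _ (by measurability)]
  exact ENNReal.coe_lt_top

lemma integral_sum_smul_dirac {X ι : Type*} [MeasurableSpace X] [MeasurableSingletonClass X]
    (s : Finset ι) (c : ι → ℝ≥0∞) (hc : ∀ q ∈ s, c q ≠ ⊤) (e : ι → X) (f : X → ℝ)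
    (hf : StronglyMeasurable f) :
    ∫ z, f z ∂(∑ q ∈ s, c q • Measure.dirac (e q)) = ∑ q ∈ s, (c q).toReal * f (e q) := by
  rw [integral_finset_sum_measure (fun q hq => (integrable_dirac' hf (e q)).smul_measure (hc q hq))]
  refine Finset.sum_congr rfl fun q _ => ?_
  rw [integral_smul_measure, integral_dirac' _ _ hf, smul_eq_mul]

lemma measurable_projfun {d : ℕ} (β : EuclideanSpace ℝ (Fin d)) :
    Measurable fun v : EuclideanSpace ℝ (Fin d) => ⟪β, v⟫ :=
  measurable_const.inner measurable_id

lemma proj_emp_apply {d n : ℕ} (β : EuclideanSpace ℝ (Fin d)) (xs : Fin n → EuclideanSpace ℝ (Fin d))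
    {s : Set ℝ} (hs : MeasurableSet s) :
    proj β (emp xs) s = (n : ℝ≥0∞)⁻¹ * ∑ i, s.indicator (fun _ => (1 : ℝ≥0∞)) ⟪β, xs i⟫ := by
  unfold proj emp
  rw [Measure.map_smul, Measure.smul_apply, smul_eq_mul]
  congr 1
  rw [Measure.map_apply (measurable_projfun β) hs, Measure.finset_sum_apply]
  refine Finset.sum_congr rfl fun i _ => ?_
  rw [Measure.dirac_apply' _ ((measurable_projfun β) hs)]
  rfl

lemma emp_proj_prob {d n : ℕ} (hn : 0 < n) (β : EuclideanSpace ℝ (Fin d))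
    (xs : Fin n → EuclideanSpace ℝ (Fin d)) : IsProbabilityMeasure (proj β (emp xs)) := by
  constructor
  rw [proj_emp_apply β xs MeasurableSet.univ]
  simp only [Set.indicator_of_mem (Set.mem_univ _), Finset.sum_const, Finset.card_univ,
    Fintype.card_fin, nsmul_eq_mul, mul_one]
  exact ENNReal.inv_mul_cancel (by exact_mod_cast hn.ne') (ENNReal.natCast_ne_top n)

lemma proj_emp_null {d n : ℕ} (β : EuclideanSpace ℝ (Fin d)) (xs : Fin n → EuclideanSpace ℝ (Fin d))
    {s : Set ℝ} (hs : MeasurableSet s) (h : ∀ i, ⟪β, xs i⟫ ∉ s) : proj β (emp xs) s = 0 := by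
  rw [proj_emp_apply β xs hs]
  have : ∀ i : Fin n, s.indicator (fun _ => (1 : ℝ≥0∞)) ⟪β, xs i⟫ = 0 :=
    fun i => Set.indicator_of_notMem (h i) _
  simp only [this, Finset.sum_const_zero, mul_zero]

lemma ptwise {d : ℕ} {R ε : ℝ} (hR : 0 ≤ R) {α β v : EuclideanSpace ℝ (Fin d)}
    (hα : ‖α‖ ≤ 1) (hβ : ‖β‖ ≤ 1) (hαβ : ‖α - β‖ < ε) (hv : ‖v‖ ≤ 2 * R) :
    ⟪β, v⟫ ^ 2 ≤ ⟪α, v⟫ ^ 2 + 8 * ε * R ^ 2 := by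
  have hε : 0 ≤ ε := le_trans (norm_nonneg _) hαβ.le
  have h1 : |⟪β - α, v⟫| ≤ ε * (2 * R) := by
    refine le_trans (abs_real_inner_le_norm _ _) ?_
    have hba : ‖β - α‖ ≤ ε := by rw [norm_sub_rev]; exact hαβ.le
    exact mul_le_mul hba hv (norm_nonneg _) hε
  have h2 : |⟪β + α, v⟫| ≤ 2 * (2 * R) := by
    refine le_trans (abs_real_inner_le_norm _ _) ?_
    exact mul_le_mul (le_trans (norm_add_le _ _) (by linarith)) hv (norm_nonneg _) (by norm_num)
  have h3 : ⟪β - α, v⟫ = ⟪β, v⟫ - ⟪α, v⟫ := inner_sub_left β α v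
  have h4 : ⟪β + α, v⟫ = ⟪β, v⟫ + ⟪α, v⟫ := inner_add_left β α v
  have habs : ⟪β, v⟫ ^ 2 - ⟪α, v⟫ ^ 2 ≤ |⟪β - α, v⟫| * |⟪β + α, v⟫| := by
    calc ⟪β, v⟫ ^ 2 - ⟪α, v⟫ ^ 2 = ⟪β - α, v⟫ * ⟪β + α, v⟫ := by rw [h3, h4]; ring
      _ ≤ |⟪β - α, v⟫ * ⟪β + α, v⟫| := le_abs_self _
      _ = |⟪β - α, v⟫| * |⟪β + α, v⟫| := abs_mul _ _
  have hmul : |⟪β - α, v⟫| * |⟪β + α, v⟫| ≤ (ε * (2 * R)) * (2 * (2 * R)) :=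
    mul_le_mul h1 h2 (abs_nonneg _) (by positivity)
  nlinarith [habs, hmul]

lemma cancel_aux (u v w z : ℝ) (hu : u ≠ 0) (hv : v ≠ 0) :
    u * v * (u⁻¹ * v⁻¹ * w * z) = w * z := by
  field_simp

lemma lift_coupling {d n : ℕ} (hn : 0 < n) (R ε : ℝ) (hR : 0 ≤ R)
    (x y : Fin n → EuclideanSpace ℝ (Fin d))
    (hx : ∀ i, ‖x i‖ ≤ R) (hy : ∀ j, ‖y j‖ ≤ R)
    (α β : EuclideanSpace ℝ (Fin d)) (hα : ‖α‖ ≤ 1) (hβ : ‖β‖ ≤ 1) (hαβ : ‖α - β‖ < ε)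
    (π : Measure (ℝ × ℝ)) (hπ : IsProbabilityMeasure π)
    (hfst : π.fst = proj α (emp x)) (hsnd : π.snd = proj α (emp y)) :
    ∃ γ : Measure (ℝ × ℝ), IsProbabilityMeasure γ ∧ γ.fst = proj β (emp x) ∧
      γ.snd = proj β (emp y) ∧
      ∫ p : ℝ × ℝ, (p.1 - p.2) ^ 2 ∂γ ≤ (∫ p : ℝ × ℝ, (p.1 - p.2) ^ 2 ∂π) + 8 * ε * R ^ 2 := by
  classical
  set f : ℝ × ℝ → ℝ := fun p => (p.1 - p.2) ^ 2 with hf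
  have hfmeas : StronglyMeasurable f :=
    ((continuous_fst.sub continuous_snd).pow 2).stronglyMeasurable
  set a : Fin n → ℝ := fun i => ⟪α, x i⟫ with ha
  set b : Fin n → ℝ := fun j => ⟪α, y j⟫ with hb
  set a' : Fin n → ℝ := fun i => ⟪β, x i⟫ with ha'
  set b' : Fin n → ℝ := fun j => ⟪β, y j⟫ with hb'
  set A : Finset ℝ := univ.image a with hA
  set B : Finset ℝ := univ.image b with hB
  set N1 : ℝ → ℕ := fun s => #{i ∈ univ | a i = s} with hN1def
  set N2 : ℝ → ℕ := fun t => #{j ∈ univ | b j = t} with hN2def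
  have hN1A : ∀ s ∈ A, N1 s ≠ 0 := by
    intro s hs
    obtain ⟨i, -, hi⟩ := Finset.mem_image.1 hs
    exact Finset.card_ne_zero_of_mem (Finset.mem_filter.2 ⟨Finset.mem_univ i, hi⟩)
  have hN2B : ∀ t ∈ B, N2 t ≠ 0 := by
    intro t ht
    obtain ⟨j, -, hj⟩ := Finset.mem_image.1 ht
    exact Finset.card_ne_zero_of_mem (Finset.mem_filter.2 ⟨Finset.mem_univ j, hj⟩)
  have haA : ∀ i, a i ∈ A := fun i => Finset.mem_image_of_mem a (Finset.mem_univ i)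
  have hbB : ∀ j, b j ∈ B := fun j => Finset.mem_image_of_mem b (Finset.mem_univ j)
  have hN1 : ∀ i, ((N1 (a i) : ℝ≥0∞)) ≠ 0 := fun i => Nat.cast_ne_zero.2 (hN1A _ (haA i))
  have hN2 : ∀ j, ((N2 (b j) : ℝ≥0∞)) ≠ 0 := fun j => Nat.cast_ne_zero.2 (hN2B _ (hbB j))
  have hπtop : ∀ p : ℝ × ℝ, π {p} ≠ ⊤ := fun p => measure_ne_top π _
  set c : Fin n × Fin n → ℝ≥0∞ :=
    fun q => ((N1 (a q.1) : ℝ≥0∞))⁻¹ * ((N2 (b q.2) : ℝ≥0∞))⁻¹ * π {(a q.1, b q.2)} with hc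
  have hctop : ∀ q, c q ≠ ⊤ := fun q =>
    ENNReal.mul_ne_top (ENNReal.mul_ne_top (ENNReal.inv_ne_top.2 (hN1 q.1))
      (ENNReal.inv_ne_top.2 (hN2 q.2))) (hπtop _)
  -- null sets
  have hAnull : π ((↑A : Set ℝ)ᶜ ×ˢ (Set.univ : Set ℝ)) = 0 := by
    have hset : ((↑A : Set ℝ)ᶜ ×ˢ (Set.univ : Set ℝ)) = Prod.fst ⁻¹' (↑A : Set ℝ)ᶜ := by
      ext ⟨u, v⟩
      simp only [Set.mem_prod, Set.mem_univ, and_true, Set.mem_preimage]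
    rw [hset, ← Measure.fst_apply (A.measurableSet.compl), hfst]
    exact proj_emp_null α x (A.measurableSet.compl)
      (fun i => by rw [Set.mem_compl_iff, not_not]; exact haA i)
  have hBnull : π ((Set.univ : Set ℝ) ×ˢ (↑B : Set ℝ)ᶜ) = 0 := by
    have hset : ((Set.univ : Set ℝ) ×ˢ (↑B : Set ℝ)ᶜ) = Prod.snd ⁻¹' (↑B : Set ℝ)ᶜ := by
      ext ⟨u, v⟩
      simp only [Set.mem_prod, Set.mem_univ, true_and, Set.mem_preimage]
    rw [hset, ← Measure.snd_apply (B.measurableSet.compl), hsnd]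
    exact proj_emp_null α y (B.measurableSet.compl)
      (fun j => by rw [Set.mem_compl_iff, not_not]; exact hbB j)
  -- single-fiber marginals
  have hfst_single : ∀ s : ℝ, π (({s} : Set ℝ) ×ˢ (Set.univ : Set ℝ)) = (n : ℝ≥0∞)⁻¹ * N1 s := by
    intro s
    have hset : (({s} : Set ℝ) ×ˢ (Set.univ : Set ℝ)) = Prod.fst ⁻¹' ({s} : Set ℝ) := by
      ext ⟨u, v⟩
      simp only [Set.mem_prod, Set.mem_univ, and_true, Set.mem_preimage]
    rw [hset, ← Measure.fst_apply (measurableSet_singleton s), hfst,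
      proj_emp_apply α x (measurableSet_singleton s)]
    congr 1
    have : ∀ i : Fin n, ({s} : Set ℝ).indicator (fun _ => (1 : ℝ≥0∞)) (a i)
        = if a i = s then 1 else 0 := fun i => by simp [Set.indicator_apply]
    rw [Finset.sum_congr rfl (fun i _ => this i), Finset.sum_boole]
  have hsnd_single : ∀ t : ℝ, π ((Set.univ : Set ℝ) ×ˢ ({t} : Set ℝ)) = (n : ℝ≥0∞)⁻¹ * N2 t := by
    intro t
    have hset : ((Set.univ : Set ℝ) ×ˢ ({t} : Set ℝ)) = Prod.snd ⁻¹' ({t} : Set ℝ) := by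
      ext ⟨u, v⟩
      simp only [Set.mem_prod, Set.mem_univ, true_and, Set.mem_preimage]
    rw [hset, ← Measure.snd_apply (measurableSet_singleton t), hsnd,
      proj_emp_apply α y (measurableSet_singleton t)]
    congr 1
    have : ∀ j : Fin n, ({t} : Set ℝ).indicator (fun _ => (1 : ℝ≥0∞)) (b j)
        = if b j = t then 1 else 0 := fun j => by simp [Set.indicator_apply]
    rw [Finset.sum_congr rfl (fun j _ => this j), Finset.sum_boole]
  -- row and column sums
  have hrow : ∀ i, ∑ j, c (i, j) = (n : ℝ≥0∞)⁻¹ := by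
    intro i
    have e1 : ∑ j, c (i, j)
        = ((N1 (a i) : ℝ≥0∞))⁻¹ * ∑ j, ((N2 (b j) : ℝ≥0∞))⁻¹ * π {(a i, b j)} := by
      rw [Finset.mul_sum]
      refine Finset.sum_congr rfl fun j _ => ?_
      simp only [hc]
      ring
    have e2 : ∑ j, ((N2 (b j) : ℝ≥0∞))⁻¹ * π {(a i, b j)} = ∑ t ∈ B, π {(a i, t)} := by
      rw [Finset.sum_comp (fun t => ((N2 t : ℝ≥0∞))⁻¹ * π {(a i, t)}) b]
      refine Finset.sum_congr rfl fun t ht => ?_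
      have hcard : #(filter (fun j => b j = t) univ) = N2 t := rfl
      rw [nsmul_eq_mul, ← mul_assoc, hcard]
      rw [ENNReal.mul_inv_cancel (Nat.cast_ne_zero.2 (hN2B t ht)) (ENNReal.natCast_ne_top _),
        one_mul]
    have e3 : ∑ t ∈ B, π {(a i, t)} = π (({a i} : Set ℝ) ×ˢ (↑B : Set ℝ)) := by
      have := measure_coe_finset π (({a i} : Finset ℝ) ×ˢ B)
      rw [Finset.sum_product, Finset.sum_singleton] at this
      rw [← this, Finset.coe_product, Finset.coe_singleton]
    have e4 : π (({a i} : Set ℝ) ×ˢ (↑B : Set ℝ)) = π (({a i} : Set ℝ) ×ˢ (Set.univ : Set ℝ)) := by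
      refine le_antisymm (measure_mono (Set.prod_mono_right (Set.subset_univ _))) ?_
      calc π (({a i} : Set ℝ) ×ˢ (Set.univ : Set ℝ))
          ≤ π ((({a i} : Set ℝ) ×ˢ (↑B : Set ℝ)) ∪ ((Set.univ : Set ℝ) ×ˢ (↑B : Set ℝ)ᶜ)) := by
            refine measure_mono ?_
            rintro ⟨u, v⟩ ⟨hu, -⟩
            by_cases hv : v ∈ (↑B : Set ℝ)
            · exact Or.inl ⟨hu, hv⟩
            · exact Or.inr ⟨trivial, hv⟩
        _ ≤ π (({a i} : Set ℝ) ×ˢ (↑B : Set ℝ)) + π ((Set.univ : Set ℝ) ×ˢ (↑B : Set ℝ)ᶜ) :=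
            measure_union_le _ _
        _ = π (({a i} : Set ℝ) ×ˢ (↑B : Set ℝ)) := by rw [hBnull, add_zero]
    rw [e1, e2, e3, e4, hfst_single (a i), ← mul_assoc, mul_comm _ ((n : ℝ≥0∞))⁻¹, mul_assoc,
      mul_comm ((N1 (a i) : ℝ≥0∞))⁻¹ _]
    rw [ENNReal.mul_inv_cancel (hN1 i) (ENNReal.natCast_ne_top _), mul_one]
  have hcol : ∀ j, ∑ i, c (i, j) = (n : ℝ≥0∞)⁻¹ := by
    intro j
    have e1 : ∑ i, c (i, j)
        = ((N2 (b j) : ℝ≥0∞))⁻¹ * ∑ i, ((N1 (a i) : ℝ≥0∞))⁻¹ * π {(a i, b j)} := by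
      rw [Finset.mul_sum]
      refine Finset.sum_congr rfl fun i _ => ?_
      simp only [hc]
      ring
    have e2 : ∑ i, ((N1 (a i) : ℝ≥0∞))⁻¹ * π {(a i, b j)} = ∑ s ∈ A, π {(s, b j)} := by
      rw [Finset.sum_comp (fun s => ((N1 s : ℝ≥0∞))⁻¹ * π {(s, b j)}) a]
      refine Finset.sum_congr rfl fun s hs => ?_
      have hcard : #(filter (fun i => a i = s) univ) = N1 s := rfl
      rw [nsmul_eq_mul, ← mul_assoc, hcard]
      rw [ENNReal.mul_inv_cancel (Nat.cast_ne_zero.2 (hN1A s hs)) (ENNReal.natCast_ne_top _),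
        one_mul]
    have e3 : ∑ s ∈ A, π {(s, b j)} = π ((↑A : Set ℝ) ×ˢ ({b j} : Set ℝ)) := by
      have := measure_coe_finset π (A ×ˢ ({b j} : Finset ℝ))
      rw [Finset.sum_product] at this
      simp only [Finset.sum_singleton] at this
      rw [← this, Finset.coe_product, Finset.coe_singleton]
    have e4 : π ((↑A : Set ℝ) ×ˢ ({b j} : Set ℝ)) = π ((Set.univ : Set ℝ) ×ˢ ({b j} : Set ℝ)) := by
      refine le_antisymm (measure_mono (Set.prod_mono_left (Set.subset_univ _))) ?_
      calc π ((Set.univ : Set ℝ) ×ˢ ({b j} : Set ℝ))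
          ≤ π (((↑A : Set ℝ) ×ˢ ({b j} : Set ℝ)) ∪ ((↑A : Set ℝ)ᶜ ×ˢ (Set.univ : Set ℝ))) := by
            refine measure_mono ?_
            rintro ⟨u, v⟩ ⟨-, hv⟩
            by_cases hu : u ∈ (↑A : Set ℝ)
            · exact Or.inl ⟨hu, hv⟩
            · exact Or.inr ⟨hu, trivial⟩
        _ ≤ π ((↑A : Set ℝ) ×ˢ ({b j} : Set ℝ)) + π ((↑A : Set ℝ)ᶜ ×ˢ (Set.univ : Set ℝ)) :=
            measure_union_le _ _
        _ = π ((↑A : Set ℝ) ×ˢ ({b j} : Set ℝ)) := by rw [hAnull, add_zero]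
    rw [e1, e2, e3, e4, hsnd_single (b j), ← mul_assoc, mul_comm _ ((n : ℝ≥0∞))⁻¹, mul_assoc,
      mul_comm ((N2 (b j) : ℝ≥0∞))⁻¹ _]
    rw [ENNReal.mul_inv_cancel (hN2 j) (ENNReal.natCast_ne_top _), mul_one]
  -- the lifted coupling
  set γ : Measure (ℝ × ℝ) := ∑ q : Fin n × Fin n, c q • Measure.dirac (a' q.1, b' q.2) with hγ
  have hfstγ : γ.fst = proj β (emp x) := by
    ext s hs
    rw [Measure.fst_apply hs, proj_emp_apply β x hs, hγ, Measure.finset_sum_apply]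
    have hterm : ∀ q : Fin n × Fin n,
        (c q • Measure.dirac ((a' q.1, b' q.2))) (Prod.fst ⁻¹' s)
          = c q * s.indicator (fun _ => (1 : ℝ≥0∞)) (a' q.1) := by
      intro q
      rw [Measure.smul_apply, Measure.dirac_apply' _ (measurable_fst hs), smul_eq_mul]
      rfl
    rw [Finset.sum_congr rfl (fun q _ => hterm q), Fintype.sum_prod_type, Finset.mul_sum]
    refine Finset.sum_congr rfl fun i _ => ?_
    have h2 : ∀ j : Fin n, c (i, j) * s.indicator (fun _ => (1 : ℝ≥0∞)) (a' (i, j).1)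
        = c (i, j) * s.indicator (fun _ => (1 : ℝ≥0∞)) (a' i) := fun j => rfl
    rw [Finset.sum_congr rfl (fun j _ => h2 j), ← Finset.sum_mul, hrow i]
  have hsndγ : γ.snd = proj β (emp y) := by
    ext s hs
    rw [Measure.snd_apply hs, proj_emp_apply β y hs, hγ, Measure.finset_sum_apply]
    have hterm : ∀ q : Fin n × Fin n,
        (c q • Measure.dirac ((a' q.1, b' q.2))) (Prod.snd ⁻¹' s)
          = c q * s.indicator (fun _ => (1 : ℝ≥0∞)) (b' q.2) := by
      intro q
      rw [Measure.smul_apply, Measure.dirac_apply' _ (measurable_snd hs), smul_eq_mul]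
      rfl
    rw [Finset.sum_congr rfl (fun q _ => hterm q), Fintype.sum_prod_type_right, Finset.mul_sum]
    refine Finset.sum_congr rfl fun j _ => ?_
    have h2 : ∀ i : Fin n, c (i, j) * s.indicator (fun _ => (1 : ℝ≥0∞)) (b' (i, j).2)
        = c (i, j) * s.indicator (fun _ => (1 : ℝ≥0∞)) (b' j) := fun i => rfl
    rw [Finset.sum_congr rfl (fun i _ => h2 i), ← Finset.sum_mul, hcol j]
  have hprobγ : IsProbabilityMeasure γ := by
    constructor
    rw [← Measure.fst_univ, hfstγ]
    exact (emp_proj_prob hn β x).measure_univ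
  -- decompose π over its atoms
  set T : Finset (ℝ × ℝ) := A ×ˢ B with hT
  have hTnull : π ((↑T : Set (ℝ × ℝ))ᶜ) = 0 := by
    have hsub : (↑T : Set (ℝ × ℝ))ᶜ
        ⊆ ((↑A : Set ℝ)ᶜ ×ˢ (Set.univ : Set ℝ)) ∪ ((Set.univ : Set ℝ) ×ˢ (↑B : Set ℝ)ᶜ) := by
      rintro ⟨u, v⟩ hp
      rw [Set.mem_compl_iff, hT, Finset.coe_product, Set.mem_prod] at hp
      push_neg at hp
      by_cases hu : u ∈ (↑A : Set ℝ)
      · exact Or.inr ⟨trivial, hp hu⟩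
      · exact Or.inl ⟨hu, trivial⟩
    refine le_antisymm ?_ zero_le
    calc π ((↑T : Set (ℝ × ℝ))ᶜ)
        ≤ π (((↑A : Set ℝ)ᶜ ×ˢ (Set.univ : Set ℝ)) ∪ ((Set.univ : Set ℝ) ×ˢ (↑B : Set ℝ)ᶜ)) :=
          measure_mono hsub
      _ ≤ π ((↑A : Set ℝ)ᶜ ×ˢ (Set.univ : Set ℝ)) + π ((Set.univ : Set ℝ) ×ˢ (↑B : Set ℝ)ᶜ) :=
          measure_union_le _ _
      _ = 0 := by rw [hAnull, hBnull, add_zero]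
  have hcostπ : ∫ p : ℝ × ℝ, f p ∂π = ∑ p ∈ T, (π {p}).toReal * f p := by
    conv_lhs => rw [meas_eq_sum_dirac π T hTnull]
    exact integral_sum_smul_dirac T (fun p => π {p}) (fun p _ => hπtop p) (fun p => p) f hfmeas
  have hcostγ : ∫ p : ℝ × ℝ, f p ∂γ
      = ∑ q : Fin n × Fin n, (c q).toReal * f (a' q.1, b' q.2) := by
    rw [hγ]
    exact integral_sum_smul_dirac univ c (fun q _ => hctop q) (fun q => (a' q.1, b' q.2)) f hfmeas
  -- regroup the cost of π
  have hregroup : ∑ q : Fin n × Fin n, (c q).toReal * f (a q.1, b q.2)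
      = ∑ p ∈ T, (π {p}).toReal * f p := by
    set G : ℝ × ℝ → ℝ :=
      fun p => (((N1 p.1 : ℝ≥0∞))⁻¹ * ((N2 p.2 : ℝ≥0∞))⁻¹ * π {p}).toReal * f p with hG
    have h1 : ∀ q : Fin n × Fin n, (c q).toReal * f (a q.1, b q.2) = G (a q.1, b q.2) :=
      fun q => rfl
    rw [Finset.sum_congr rfl (fun q _ => h1 q),
      Finset.sum_comp G (fun q : Fin n × Fin n => (a q.1, b q.2))]
    have himg : (univ : Finset (Fin n × Fin n)).image (fun q => (a q.1, b q.2)) = T := by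
      ext p
      rw [hT, Finset.mem_product, Finset.mem_image]
      constructor
      · rintro ⟨q, -, hq⟩
        rw [← hq]
        exact ⟨haA q.1, hbB q.2⟩
      · rintro ⟨h1', h2'⟩
        rw [hA, Finset.mem_image] at h1'
        rw [hB, Finset.mem_image] at h2'
        obtain ⟨i, -, hi⟩ := h1'
        obtain ⟨j, -, hj⟩ := h2'
        exact ⟨(i, j), Finset.mem_univ _, Prod.ext hi hj⟩
    rw [himg]
    refine Finset.sum_congr rfl fun p hp => ?_
    obtain ⟨hpA, hpB⟩ := Finset.mem_product.1 hp
    have hfib : {q ∈ (univ : Finset (Fin n × Fin n)) | (a q.1, b q.2) = p}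
        = ({i ∈ (univ : Finset (Fin n)) | a i = p.1} ×ˢ {j ∈ (univ : Finset (Fin n)) | b j = p.2}) := by
      ext q
      simp only [Finset.mem_filter, Finset.mem_univ, true_and, Finset.mem_product, Prod.ext_iff]
    rw [hfib, Finset.card_product]
    have hN1R : ((N1 p.1 : ℝ)) ≠ 0 := Nat.cast_ne_zero.2 (hN1A _ hpA)
    have hN2R : ((N2 p.2 : ℝ)) ≠ 0 := Nat.cast_ne_zero.2 (hN2B _ hpB)
    have hc1 : #(filter (fun i => a i = p.1) univ) = N1 p.1 := rfl
    have hc2 : #(filter (fun j => b j = p.2) univ) = N2 p.2 := rfl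
    rw [hc1, hc2, nsmul_eq_mul]
    simp only [hG]
    rw [ENNReal.toReal_mul, ENNReal.toReal_mul, ENNReal.toReal_inv, ENNReal.toReal_inv,
      ENNReal.toReal_natCast, ENNReal.toReal_natCast, Nat.cast_mul]
    exact cancel_aux _ _ _ _ hN1R hN2R
  -- total mass of c
  have hsumc : ∑ q : Fin n × Fin n, c q = 1 := by
    rw [Fintype.sum_prod_type, Finset.sum_congr rfl (fun i _ => hrow i), Finset.sum_const,
      Finset.card_univ, Fintype.card_fin, nsmul_eq_mul]
    exact ENNReal.mul_inv_cancel (by exact_mod_cast hn.ne') (ENNReal.natCast_ne_top n)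
  have hsumc' : ∑ q : Fin n × Fin n, (c q).toReal = 1 := by
    rw [← ENNReal.toReal_sum (fun q _ => hctop q), hsumc, ENNReal.toReal_one]
  -- pointwise bound
  have hptw : ∀ q : Fin n × Fin n, f (a' q.1, b' q.2) ≤ f (a q.1, b q.2) + 8 * ε * R ^ 2 := by
    rintro ⟨i, j⟩
    have hv : ‖x i - y j‖ ≤ 2 * R := (norm_sub_le _ _).trans (by linarith [hx i, hy j])
    have h1 : f (a' i, b' j) = ⟪β, x i - y j⟫ ^ 2 := by
      simp only [hf, ha', hb', inner_sub_right]
    have h2 : f (a i, b j) = ⟪α, x i - y j⟫ ^ 2 := by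
      simp only [hf, ha, hb, inner_sub_right]
    rw [h1, h2]
    exact ptwise hR hα hβ hαβ hv
  refine ⟨γ, hprobγ, hfstγ, hsndγ, ?_⟩
  calc ∫ p : ℝ × ℝ, f p ∂γ = ∑ q : Fin n × Fin n, (c q).toReal * f (a' q.1, b' q.2) := hcostγ
    _ ≤ ∑ q : Fin n × Fin n, (c q).toReal * (f (a q.1, b q.2) + 8 * ε * R ^ 2) :=
        Finset.sum_le_sum fun q _ =>
          mul_le_mul_of_nonneg_left (hptw q) ENNReal.toReal_nonneg
    _ = (∑ q : Fin n × Fin n, (c q).toReal * f (a q.1, b q.2))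
        + (∑ q : Fin n × Fin n, (c q).toReal) * (8 * ε * R ^ 2) := by
        rw [Finset.sum_mul, ← Finset.sum_add_distrib]
        exact Finset.sum_congr rfl fun q _ => by ring
    _ = (∫ p : ℝ × ℝ, f p ∂π) + 8 * ε * R ^ 2 := by
        rw [hregroup, ← hcostπ, hsumc', one_mul]

lemma key_ineq {d n : ℕ} (hd : 0 < d) (R : ℝ) (hR : 0 ≤ R) (hn : 0 < n)
    (x y : Fin n → EuclideanSpace ℝ (Fin d))
    (hx : ∀ i, ‖x i‖ ≤ R) (hy : ∀ j, ‖y j‖ ≤ R)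
    (α β : EuclideanSpace ℝ (Fin d)) (hα : ‖α‖ ≤ 1) (hβ : ‖β‖ ≤ 1)
    (ε : ℝ) (hαβ : ‖α - β‖ < ε) :
    sqW2 (proj β (emp x)) (proj β (emp y))
      ≤ sqW2 (proj α (emp x)) (proj α (emp y)) + 8 * ε * R ^ 2 := by
  haveI h1 : IsProbabilityMeasure (proj α (emp x)) := emp_proj_prob hn α x
  haveI h2 : IsProbabilityMeasure (proj α (emp y)) := emp_proj_prob hn α y
  have hneα : {r : ℝ | ∃ π : Measure (ℝ × ℝ), IsProbabilityMeasure π ∧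
      π.fst = proj α (emp x) ∧ π.snd = proj α (emp y) ∧
      r = ∫ p : ℝ × ℝ, (p.1 - p.2) ^ 2 ∂π}.Nonempty := by
    refine ⟨∫ p : ℝ × ℝ, (p.1 - p.2) ^ 2 ∂((proj α (emp x)).prod (proj α (emp y))),
      (proj α (emp x)).prod (proj α (emp y)), inferInstance, ?_, ?_, rfl⟩
    · exact Measure.fst_prod
    · exact Measure.snd_prod
  have hbddβ : BddBelow {r : ℝ | ∃ π : Measure (ℝ × ℝ), IsProbabilityMeasure π ∧
      π.fst = proj β (emp x) ∧ π.snd = proj β (emp y) ∧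
      r = ∫ p : ℝ × ℝ, (p.1 - p.2) ^ 2 ∂π} := by
    refine ⟨0, ?_⟩
    rintro r ⟨π, hπ, -, -, rfl⟩
    exact integral_nonneg fun p => sq_nonneg _
  rw [sqW2, sqW2, ← sub_le_iff_le_add]
  refine le_csInf hneα ?_
  rintro r ⟨π, hπ, hfst, hsnd, rfl⟩
  obtain ⟨γ, hpγ, hg1, hg2, hg3⟩ :=
    lift_coupling hn R ε hR x y hx hy α β hα hβ hαβ π hπ hfst hsnd
  have hle : sInf {r : ℝ | ∃ π : Measure (ℝ × ℝ), IsProbabilityMeasure π ∧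
      π.fst = proj β (emp x) ∧ π.snd = proj β (emp y) ∧
      r = ∫ p : ℝ × ℝ, (p.1 - p.2) ^ 2 ∂π} ≤ ∫ p : ℝ × ℝ, (p.1 - p.2) ^ 2 ∂γ :=
    csInf_le hbddβ ⟨γ, hpγ, hg1, hg2, rfl⟩
  linarith

end Aux

theorem stmt5 {d : ℕ} (hd : 0 < d) (R : ℝ) (hR : 0 ≤ R) {n : ℕ} (hn : 0 < n)
    (x y : Fin n → EuclideanSpace ℝ (Fin d))
    (hx : ∀ i, ‖x i‖ ≤ R) (hy : ∀ j, ‖y j‖ ≤ R)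
    (α β : EuclideanSpace ℝ (Fin d)) (hα : α ∈ ballB d hd) (hβ : β ∈ ballB d hd)
    (ε : ℝ) (hαβ : ‖α - β‖ < ε) :
    |sqW2 (proj α (emp x)) (proj α (emp y)) - sqW2 (proj β (emp x)) (proj β (emp y))| ≤
      8 * ε * R ^ 2 := by
  have hβα : ‖β - α‖ < ε := by rwa [norm_sub_rev]
  have k1 := key_ineq hd R hR hn x y hx hy α β hα.1 hβ.1 ε hαβ
  have k2 := key_ineq hd R hR hn x y hx hy β α hβ.1 hα.1 ε hβα
  rw [abs_sub_le_iff]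
  constructor <;> linarith

end
end

section
/- For any Borel probability measures P and Q on ℝ with finite second moments, the squared 2-Wasserstein distance admits the quantile representation D(P,Q) = ∫₀¹ (F_P⁻¹(p) − F_Q⁻¹(p))² dp, where F_P⁻¹ and F_Q⁻¹ are the quantile functions of P and Q. -/
open MeasureTheory ProbabilityTheory
open scoped RealInnerProductSpace ENNReal

noncomputable section

/- ===== auxiliary development for stmt6 ===== -/
section QuantileAux
open Set Filter Topology

variable (μ : Measure ℝ) [IsProbabilityMeasure μ]

lemma mcdf_eq_cdf : mcdf μ = cdf μ := by
  ext x; rw [mcdf, cdf_eq_real, measureReal_def]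

lemma quant_set_nonempty {p : ℝ} (hp1 : p < 1) : {x : ℝ | p ≤ mcdf μ x}.Nonempty := by
  have h := ((tendsto_cdf_atTop μ).eventually_const_le hp1).exists
  obtain ⟨x, hx⟩ := h
  exact ⟨x, by rwa [mem_setOf_eq, mcdf_eq_cdf]⟩

lemma quant_set_bddBelow {p : ℝ} (hp0 : 0 < p) : BddBelow {x : ℝ | p ≤ mcdf μ x} := by
  obtain ⟨x0, hx0⟩ := ((tendsto_cdf_atBot μ).eventually_lt_const hp0).exists
  refine ⟨x0, fun y hy => ?_⟩
  by_contra h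
  push_neg at h
  have hm : mcdf μ y ≤ mcdf μ x0 := by
    rw [mcdf_eq_cdf]; exact monotone_cdf μ h.le
  have hy' : p ≤ mcdf μ y := hy
  exact absurd (hy'.trans hm) (not_le.mpr (by rwa [mcdf_eq_cdf]))

lemma mcdf_quant {p : ℝ} (hp0 : 0 < p) (hp1 : p < 1) : p ≤ mcdf μ (quant μ p) := by
  set S := {x : ℝ | p ≤ mcdf μ x} with hS
  set a := sInf S with ha
  have hne := quant_set_nonempty μ hp1
  have hbdd := quant_set_bddBelow μ hp0
  -- choose sequence
  have hseq : ∀ n : ℕ, ∃ x ∈ S, x < a + 1 / (n + 1) := by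
    intro n
    exact exists_lt_of_csInf_lt hne (lt_add_of_pos_right a (by positivity))
  choose x hxS hxlt using hseq
  have hxa : ∀ n, a ≤ x n := fun n => csInf_le hbdd (hxS n)
  have hxt : Tendsto x atTop (𝓝 a) := by
    have h1 : Tendsto (fun n : ℕ => a + 1 / (n + 1 : ℝ)) atTop (𝓝 (a + 0)) :=
      tendsto_const_nhds.add tendsto_one_div_add_atTop_nhds_zero_nat
    rw [add_zero] at h1
    exact tendsto_of_tendsto_of_tendsto_of_le_of_le tendsto_const_nhds h1 hxa
      (fun n => (hxlt n).le)
  have hc : ContinuousWithinAt (cdf μ) (Ici a) a := (cdf μ).right_continuous a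
  have h2 : Tendsto (fun n => cdf μ (x n)) atTop (𝓝 (cdf μ a)) := by
    refine hc.tendsto.comp (tendsto_nhdsWithin_of_tendsto_nhds_of_eventually_within x hxt ?_)
    exact Eventually.of_forall fun n => hxa n
  have h3 : ∀ n, p ≤ cdf μ (x n) := fun n => by
    have := hxS n; rwa [hS, mem_setOf_eq, mcdf_eq_cdf] at this
  have := ge_of_tendsto h2 (Eventually.of_forall h3)
  rwa [mcdf_eq_cdf, quant]

lemma quant_le_iff {p x : ℝ} (hp0 : 0 < p) (hp1 : p < 1) :
    quant μ p ≤ x ↔ p ≤ mcdf μ x := by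
  constructor
  · intro h
    calc p ≤ mcdf μ (quant μ p) := mcdf_quant μ hp0 hp1
    _ ≤ mcdf μ x := by rw [mcdf_eq_cdf]; exact monotone_cdf μ h
  · intro h
    exact csInf_le (quant_set_bddBelow μ hp0) h

lemma lt_quant_iff {p s : ℝ} (hp0 : 0 < p) (hp1 : p < 1) :
    s < quant μ p ↔ mcdf μ s < p := by
  rw [← not_le, ← not_le, quant_le_iff μ hp0 hp1]
/-- measurable version of quant, equal on (0,1) -/
def qf (μ : Measure ℝ) : ℝ → ℝ := (Set.Ioo (0:ℝ) 1).piecewise (quant μ) 0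

variable (μ : Measure ℝ) [IsProbabilityMeasure μ]

lemma qf_eqOn : EqOn (qf μ) (quant μ) (Ioo 0 1) := fun p hp => Set.piecewise_eqOn _ _ _ hp

lemma qf_preimage (x : ℝ) :
    qf μ ⁻¹' (Iic x) = (Ioo (0:ℝ) 1 ∩ Iic (mcdf μ x)) ∪ ((Ioo (0:ℝ) 1)ᶜ ∩ {p : ℝ | (0:ℝ) ≤ x}) := by
  ext p
  by_cases hp : p ∈ Ioo (0:ℝ) 1
  · simp only [mem_preimage, mem_Iic, qf, Set.piecewise_eq_of_mem _ _ _ hp, mem_union,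
      mem_inter_iff, hp, true_and, mem_compl_iff, not_true, false_and, or_false]
    exact quant_le_iff μ hp.1 hp.2
  · simp only [mem_preimage, mem_Iic, qf, Set.piecewise_eq_of_notMem _ _ _ hp, mem_union,
      mem_inter_iff, hp, false_and, mem_compl_iff, not_false_iff, true_and, false_or,
      mem_setOf_eq]
    rfl

lemma measurable_qf : Measurable (qf μ) := by
  apply measurable_of_Iic
  intro x
  rw [qf_preimage]
  exact (measurableSet_Ioo.inter measurableSet_Iic).union
    (measurableSet_Ioo.compl.inter (by
      by_cases h : (0:ℝ) ≤ x
      · simp only [h, setOf_true]; exact MeasurableSet.univ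
      · simp only [h, setOf_false]; exact MeasurableSet.empty))

lemma vol_Ioo_inter_Iic {c : ℝ} (hc0 : 0 ≤ c) (hc1 : c ≤ 1) :
    volume (Ioo (0:ℝ) 1 ∩ Iic c) = ENNReal.ofReal c := by
  rcases eq_or_lt_of_le hc1 with h1 | h1
  · have : Ioo (0:ℝ) 1 ∩ Iic c = Ioo 0 1 := by
      rw [inter_eq_left]; intro p hp; exact le_of_lt (h1 ▸ hp.2)
    rw [this, Real.volume_Ioo, h1]; norm_num
  · have : Ioo (0:ℝ) 1 ∩ Iic c = Ioc 0 c := by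
      ext p
      simp only [mem_inter_iff, mem_Ioo, mem_Iic, mem_Ioc]
      constructor
      · rintro ⟨⟨h2, _⟩, h4⟩; exact ⟨h2, h4⟩
      · rintro ⟨h2, h3⟩; exact ⟨⟨h2, lt_of_le_of_lt h3 h1⟩, h3⟩
    rw [this, Real.volume_Ioc, sub_zero]

lemma map_qf : (volume.restrict (Ioo (0:ℝ) 1)).map (qf μ) = μ := by
  refine Measure.ext_of_Iic _ _ (fun x => ?_)
  rw [Measure.map_apply (measurable_qf μ) measurableSet_Iic, Measure.restrict_apply
    ((measurable_qf μ) measurableSet_Iic)]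
  have h : qf μ ⁻¹' (Iic x) ∩ Ioo 0 1 = Ioo (0:ℝ) 1 ∩ Iic (mcdf μ x) := by
    rw [qf_preimage]
    ext p
    simp only [mem_union, mem_inter_iff, mem_compl_iff, mem_setOf_eq]
    tauto
  rw [h, vol_Ioo_inter_Iic]
  · rw [mcdf]; exact ENNReal.ofReal_toReal (measure_ne_top μ _)
  · exact ENNReal.toReal_nonneg
  · rw [mcdf]
    exact ENNReal.toReal_le_of_le_ofReal one_pos.le (by simpa using prob_le_one)

end QuantileAux

section HoeffdingAux
open Set Filter Topology

def cfun (x s : ℝ) : ℝ := (if s < x then 1 else 0) - (if s < 0 then 1 else 0)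


lemma measurable_cfun : Measurable (fun q : ℝ × ℝ => cfun q.1 q.2) := by
  unfold cfun
  apply Measurable.sub
  · exact Measurable.ite (measurableSet_lt measurable_snd measurable_fst) measurable_const
      measurable_const
  · exact Measurable.ite (measurableSet_lt measurable_snd measurable_const) measurable_const
      measurable_const

lemma cfun_eq_of_nonneg {x : ℝ} (hx : 0 ≤ x) :
    cfun x = Set.indicator (Ico 0 x) (fun _ => (1:ℝ)) := by
  funext s
  unfold cfun
  by_cases h1 : s < 0
  · simp [h1, lt_of_lt_of_le h1 hx, Set.indicator, not_le.mpr h1]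
  · by_cases h2 : s < x
    · simp [h1, h2, Set.indicator, not_lt.mp h1]
    · simp [h1, h2, Set.indicator]

lemma cfun_eq_of_neg {x : ℝ} (hx : x < 0) :
    cfun x = fun s => -(Set.indicator (Ico x 0) (fun _ => (1:ℝ)) s) := by
  funext s
  unfold cfun
  by_cases h1 : s < x
  · simp [h1, h1.trans hx, Set.indicator, not_le.mpr h1]
  · by_cases h2 : s < 0
    · simp [h1, h2, Set.indicator, not_lt.mp h1]
    · simp [h1, h2, Set.indicator, not_lt.mp h2]

lemma integrable_indicator_Ico (a b : ℝ) :
    Integrable (Set.indicator (Ico a b) fun _ => (1:ℝ)) volume := by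
  rw [integrable_indicator_iff measurableSet_Ico]
  exact integrableOn_const (by rw [Real.volume_Ico]; exact ENNReal.ofReal_ne_top)

lemma integrable_cfun (x : ℝ) : Integrable (cfun x) volume := by
  rcases le_or_gt 0 x with hx | hx
  · rw [cfun_eq_of_nonneg hx]
    exact integrable_indicator_Ico 0 x
  · rw [cfun_eq_of_neg hx]
    exact (integrable_indicator_Ico x 0).neg

lemma integral_cfun (x : ℝ) : ∫ s, cfun x s = x := by
  rcases le_or_gt 0 x with hx | hx
  · rw [cfun_eq_of_nonneg hx, integral_indicator_const _ measurableSet_Ico]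
    simp [Real.volume_Ico, hx]
  · rw [cfun_eq_of_neg hx]
    rw [integral_neg, integral_indicator_const _ measurableSet_Ico]
    simp [Real.volume_Ico, hx.le]

lemma integral_abs_cfun (x : ℝ) : ∫ s, |cfun x s| = |x| := by
  rcases le_or_gt 0 x with hx | hx
  · rw [cfun_eq_of_nonneg hx]
    have : (fun s => |Set.indicator (Ico 0 x) (fun _ => (1:ℝ)) s|) =
        Set.indicator (Ico 0 x) (fun _ => (1:ℝ)) := by
      funext s; by_cases h : s ∈ Ico 0 x <;> simp [Set.indicator, h]
    rw [this, integral_indicator_const _ measurableSet_Ico]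
    simp [Real.volume_Ico, hx, abs_of_nonneg hx]
  · rw [cfun_eq_of_neg hx]
    have : (fun s => |(-(Set.indicator (Ico x 0) (fun _ => (1:ℝ)) s))|) =
        Set.indicator (Ico x 0) (fun _ => (1:ℝ)) := by
      funext s; by_cases h : s ∈ Ico x 0 <;> simp [Set.indicator, h]
    rw [this, integral_indicator_const _ measurableSet_Ico]
    simp [Real.volume_Ico, hx.le, abs_of_neg hx]
/-- the big kernel -/
def bigF (zw : (ℝ × ℝ) × (ℝ × ℝ)) : ℝ := cfun zw.1.1 zw.2.1 * cfun zw.1.2 zw.2.2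

lemma measurable_bigF : Measurable bigF := by
  apply Measurable.mul
  · exact measurable_cfun.comp ((measurable_fst.comp measurable_fst).prodMk
      (measurable_fst.comp measurable_snd))
  · exact measurable_cfun.comp ((measurable_snd.comp measurable_fst).prodMk
      (measurable_snd.comp measurable_snd))

lemma integrable_bigF_section (z : ℝ × ℝ) :
    Integrable (fun w : ℝ × ℝ => cfun z.1 w.1 * cfun z.2 w.2) (volume.prod volume) :=
  (integrable_cfun z.1).mul_prod (integrable_cfun z.2)

lemma integral_bigF_section (z : ℝ × ℝ) :
    ∫ w : ℝ × ℝ, cfun z.1 w.1 * cfun z.2 w.2 ∂(volume.prod volume) = z.1 * z.2 := by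
  rw [integral_prod_mul, integral_cfun, integral_cfun]

lemma integral_norm_bigF_section (z : ℝ × ℝ) :
    ∫ w : ℝ × ℝ, ‖cfun z.1 w.1 * cfun z.2 w.2‖ ∂(volume.prod volume) = |z.1 * z.2| := by
  have : (fun w : ℝ × ℝ => ‖cfun z.1 w.1 * cfun z.2 w.2‖)
      = fun w : ℝ × ℝ => |cfun z.1 w.1| * |cfun z.2 w.2| := by
    funext w; rw [Real.norm_eq_abs, abs_mul]
  rw [this, abs_mul, ← integral_abs_cfun z.1, ← integral_abs_cfun z.2]
  exact integral_prod_mul (fun s => |cfun z.1 s|) (fun t => |cfun z.2 t|)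

variable (π : Measure (ℝ × ℝ)) [IsProbabilityMeasure π]

lemma integrable_bigF (hint : Integrable (fun z : ℝ × ℝ => z.1 * z.2) π) :
    Integrable bigF (π.prod (volume.prod volume)) := by
  refine (integrable_prod_iff measurable_bigF.aestronglyMeasurable).mpr ⟨?_, ?_⟩
  · exact Eventually.of_forall fun z => integrable_bigF_section z
  · apply (hint.abs.congr ?_)
    exact Eventually.of_forall fun z => (integral_norm_bigF_section z).symm

/-- Hoeffding representation -/
lemma integral_mul_eq (hint : Integrable (fun z : ℝ × ℝ => z.1 * z.2) π) :
    ∫ z : ℝ × ℝ, z.1 * z.2 ∂π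
      = ∫ w : ℝ × ℝ, (∫ z : ℝ × ℝ, cfun z.1 w.1 * cfun z.2 w.2 ∂π) ∂(volume.prod volume) := by
  have h1 : ∫ z : ℝ × ℝ, z.1 * z.2 ∂π
      = ∫ z : ℝ × ℝ, (∫ w : ℝ × ℝ, cfun z.1 w.1 * cfun z.2 w.2 ∂(volume.prod volume)) ∂π := by
    refine integral_congr_ae (Eventually.of_forall fun z => ?_)
    exact (integral_bigF_section z).symm
  rw [h1]
  exact integral_integral_swap (integrable_bigF π hint)

lemma integrable_K (hint : Integrable (fun z : ℝ × ℝ => z.1 * z.2) π) :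
    Integrable (fun w : ℝ × ℝ => ∫ z : ℝ × ℝ, cfun z.1 w.1 * cfun z.2 w.2 ∂π)
      (volume.prod volume) :=
  (integrable_bigF π hint).integral_prod_right

section Kexp
variable (π : Measure (ℝ × ℝ)) [IsProbabilityMeasure π]
lemma mcdf_nonneg (μ : Measure ℝ) (s : ℝ) : 0 ≤ mcdf μ s := ENNReal.toReal_nonneg
lemma mcdf_le_one (μ : Measure ℝ) [IsProbabilityMeasure μ] (s : ℝ) : mcdf μ s ≤ 1 := by
  rw [mcdf_eq_cdf]; exact cdf_le_one μ s

lemma toReal_Ioi (μ : Measure ℝ) [IsProbabilityMeasure μ] (s : ℝ) :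
    (μ (Ioi s)).toReal = 1 - mcdf μ s := by
  have h : μ (Ioi s) = μ univ - μ (Iic s) := by
    rw [← Set.compl_Iic, measure_compl measurableSet_Iic (measure_ne_top μ _)]
  rw [h, measure_univ, ENNReal.toReal_sub_of_le prob_le_one ENNReal.one_ne_top]
  simp [mcdf]

variable (π : Measure (ℝ × ℝ)) [IsProbabilityMeasure π]

lemma K_eq (s t : ℝ) :
    ∫ z : ℝ × ℝ, cfun z.1 s * cfun z.2 t ∂π
    = (π (Ioi s ×ˢ Ioi t)).toReal
      - (if t < 0 then (1:ℝ) else 0) * (π.fst (Ioi s)).toReal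
      - (if s < 0 then (1:ℝ) else 0) * (π.snd (Ioi t)).toReal
      + (if s < 0 then (1:ℝ) else 0) * (if t < 0 then (1:ℝ) else 0) := by
  set a := (if s < 0 then (1:ℝ) else 0) with ha
  set b := (if t < 0 then (1:ℝ) else 0) with hb
  have key : ∀ z : ℝ × ℝ, cfun z.1 s * cfun z.2 t
      = Set.indicator (Ioi s ×ˢ Ioi t) (fun _ => (1:ℝ)) z
        - b * Set.indicator (Ioi s ×ˢ (univ : Set ℝ)) (fun _ => (1:ℝ)) z
        - a * Set.indicator ((univ : Set ℝ) ×ˢ Ioi t) (fun _ => (1:ℝ)) z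
        + a * b := by
    intro z
    simp only [cfun, Set.indicator, mem_prod, mem_Ioi, mem_univ, and_true, true_and, ← ha, ← hb]
    by_cases h1 : s < z.1 <;> by_cases h2 : t < z.2 <;> simp [h1, h2] <;> ring
  have i1 : Integrable (Set.indicator (Ioi s ×ˢ Ioi t) (fun _ => (1:ℝ))) π :=
    (integrable_const (1:ℝ)).indicator (measurableSet_Ioi.prod measurableSet_Ioi)
  have i2 : Integrable (Set.indicator (Ioi s ×ˢ (univ : Set ℝ)) (fun _ => (1:ℝ))) π :=
    (integrable_const (1:ℝ)).indicator (measurableSet_Ioi.prod MeasurableSet.univ)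
  have i3 : Integrable (Set.indicator ((univ : Set ℝ) ×ˢ Ioi t) (fun _ => (1:ℝ))) π :=
    (integrable_const (1:ℝ)).indicator (MeasurableSet.univ.prod measurableSet_Ioi)
  have i2' : Integrable (fun z : ℝ × ℝ => b * Set.indicator (Ioi s ×ˢ (univ : Set ℝ)) (fun _ => (1:ℝ)) z) π :=
    i2.const_mul b
  have i3' : Integrable (fun z : ℝ × ℝ => a * Set.indicator ((univ : Set ℝ) ×ˢ Ioi t) (fun _ => (1:ℝ)) z) π :=
    i3.const_mul a
  have i12 : Integrable (fun z : ℝ × ℝ => Set.indicator (Ioi s ×ˢ Ioi t) (fun _ => (1:ℝ)) z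
      - b * Set.indicator (Ioi s ×ˢ (univ : Set ℝ)) (fun _ => (1:ℝ)) z) π := i1.sub i2'
  have i123 : Integrable (fun z : ℝ × ℝ => Set.indicator (Ioi s ×ˢ Ioi t) (fun _ => (1:ℝ)) z
      - b * Set.indicator (Ioi s ×ˢ (univ : Set ℝ)) (fun _ => (1:ℝ)) z
      - a * Set.indicator ((univ : Set ℝ) ×ˢ Ioi t) (fun _ => (1:ℝ)) z) π := i12.sub i3'
  rw [integral_congr_ae (Eventually.of_forall key)]
  rw [integral_add i123 (integrable_const (a * b)),
    integral_sub i12 i3',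
    integral_sub i1 i2', integral_const_mul, integral_const_mul,
    integral_indicator_const _ (measurableSet_Ioi.prod measurableSet_Ioi),
    integral_indicator_const _ (measurableSet_Ioi.prod MeasurableSet.univ),
    integral_indicator_const _ (MeasurableSet.univ.prod measurableSet_Ioi),
    integral_const, probReal_univ, measureReal_def, measureReal_def, measureReal_def]
  have e1 : π (Ioi s ×ˢ (univ : Set ℝ)) = π.fst (Ioi s) := by
    rw [Measure.fst_apply measurableSet_Ioi, Set.prod_univ]
  have e2 : π ((univ : Set ℝ) ×ˢ Ioi t) = π.snd (Ioi t) := by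
    rw [Measure.snd_apply measurableSet_Ioi, Set.univ_prod]
  rw [e1, e2]
  simp [smul_eq_mul]
  try ring

lemma coupling_le_fst (s t : ℝ) : π (Ioi s ×ˢ Ioi t) ≤ π.fst (Ioi s) := by
  rw [Measure.fst_apply measurableSet_Ioi, ← Set.prod_univ]
  exact measure_mono (Set.prod_mono subset_rfl (subset_univ _))

lemma coupling_le_snd (s t : ℝ) : π (Ioi s ×ˢ Ioi t) ≤ π.snd (Ioi t) := by
  rw [Measure.snd_apply measurableSet_Ioi, ← Set.univ_prod]
  exact measure_mono (Set.prod_mono (subset_univ _) subset_rfl)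

-- comonotone coupling
variable (P Q : Measure ℝ) [IsProbabilityMeasure P] [IsProbabilityMeasure Q]

lemma comono_prod_apply (s t : ℝ) :
    ((volume.restrict (Ioo (0:ℝ) 1)).map (fun p => (qf P p, qf Q p))) (Ioi s ×ˢ Ioi t)
      = ENNReal.ofReal (1 - max (mcdf P s) (mcdf Q t)) := by
  rw [Measure.map_apply ((measurable_qf P).prodMk (measurable_qf Q))
    (measurableSet_Ioi.prod measurableSet_Ioi)]
  rw [Measure.restrict_apply (((measurable_qf P).prodMk (measurable_qf Q))
    (measurableSet_Ioi.prod measurableSet_Ioi))]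
  set m := max (mcdf P s) (mcdf Q t) with hm
  have hm0 : 0 ≤ m := le_trans (mcdf_nonneg P s) (le_max_left _ _)
  have hm1 : m ≤ 1 := max_le (mcdf_le_one P s) (mcdf_le_one Q t)
  have hset : (fun p => (qf P p, qf Q p)) ⁻¹' (Ioi s ×ˢ Ioi t) ∩ Ioo 0 1 = Ioo m 1 := by
    ext p
    simp only [mem_inter_iff, mem_preimage, mem_prod, mem_Ioi, mem_Ioo]
    constructor
    · rintro ⟨⟨h1, h2⟩, h3, h4⟩
      rw [qf_eqOn P ⟨h3, h4⟩] at h1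
      rw [qf_eqOn Q ⟨h3, h4⟩] at h2
      rw [lt_quant_iff P h3 h4] at h1
      rw [lt_quant_iff Q h3 h4] at h2
      exact ⟨max_lt h1 h2, h4⟩
    · rintro ⟨h1, h4⟩
      have h3 : 0 < p := lt_of_le_of_lt hm0 h1
      refine ⟨⟨?_, ?_⟩, h3, h4⟩
      · rw [qf_eqOn P ⟨h3, h4⟩, lt_quant_iff P h3 h4]
        exact lt_of_le_of_lt (le_max_left _ _) h1
      · rw [qf_eqOn Q ⟨h3, h4⟩, lt_quant_iff Q h3 h4]
        exact lt_of_le_of_lt (le_max_right _ _) h1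
  rw [hset, Real.volume_Ioo]

lemma comono_prod_toReal (s t : ℝ) :
    (((volume.restrict (Ioo (0:ℝ) 1)).map (fun p => (qf P p, qf Q p))) (Ioi s ×ˢ Ioi t)).toReal
      = min ((P (Ioi s)).toReal) ((Q (Ioi t)).toReal) := by
  rw [comono_prod_apply, ENNReal.toReal_ofReal (by
    have : max (mcdf P s) (mcdf Q t) ≤ 1 := max_le (mcdf_le_one P s) (mcdf_le_one Q t)
    linarith)]
  rw [toReal_Ioi, toReal_Ioi]
  rcases max_cases (mcdf P s) (mcdf Q t) with ⟨h1, h2⟩ | ⟨h1, h2⟩ <;> rw [h1] <;>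
    [rw [min_eq_left (by linarith)]; rw [min_eq_right (by linarith)]]

end Kexp
end HoeffdingAux

section AssemblyAux
open Set Filter Topology
instance : IsProbabilityMeasure (volume.restrict (Ioo (0:ℝ) 1)) :=
  ⟨by rw [Measure.restrict_apply MeasurableSet.univ, univ_inter, Real.volume_Ioo]; norm_num⟩

variable (P Q : Measure ℝ) [IsProbabilityMeasure P] [IsProbabilityMeasure Q]

/-- comonotone coupling -/
def comono : Measure (ℝ × ℝ) :=
  (volume.restrict (Ioo (0:ℝ) 1)).map (fun p => (qf P p, qf Q p))

instance : IsProbabilityMeasure (comono P Q) :=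
  Measure.isProbabilityMeasure_map ((measurable_qf P).prodMk (measurable_qf Q)).aemeasurable

lemma comono_fst : (comono P Q).fst = P := by
  rw [comono, Measure.fst_map_prodMk (measurable_qf Q), map_qf]

lemma comono_snd : (comono P Q).snd = Q := by
  rw [comono, Measure.snd_map_prodMk (measurable_qf P), map_qf]

-- integrability transfers
lemma integrable_sq_fst (π : Measure (ℝ × ℝ)) [IsProbabilityMeasure π] (hfst : π.fst = P)
    (hP : Integrable (fun x => x ^ 2) P) : Integrable (fun z : ℝ × ℝ => z.1 ^ 2) π := by
  have : P = π.map Prod.fst := by rw [← hfst]; rfl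
  rw [this] at hP
  exact (integrable_map_measure (by fun_prop) measurable_fst.aemeasurable).mp hP

lemma integrable_sq_snd (π : Measure (ℝ × ℝ)) [IsProbabilityMeasure π] (hsnd : π.snd = Q)
    (hQ : Integrable (fun x => x ^ 2) Q) : Integrable (fun z : ℝ × ℝ => z.2 ^ 2) π := by
  have : Q = π.map Prod.snd := by rw [← hsnd]; rfl
  rw [this] at hQ
  exact (integrable_map_measure (by fun_prop) measurable_snd.aemeasurable).mp hQ

lemma integrable_mul (π : Measure (ℝ × ℝ)) [IsProbabilityMeasure π]
    (h1 : Integrable (fun z : ℝ × ℝ => z.1 ^ 2) π) (h2 : Integrable (fun z : ℝ × ℝ => z.2 ^ 2) π) :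
    Integrable (fun z : ℝ × ℝ => z.1 * z.2) π := by
  refine Integrable.mono' ((h1.add h2).div_const 2) (by fun_prop) ?_
  refine Eventually.of_forall fun z => ?_
  rw [Real.norm_eq_abs, abs_mul]
  simp only [Pi.add_apply]
  nlinarith [sq_nonneg (|z.1| - |z.2|), sq_abs z.1, sq_abs z.2, abs_nonneg z.1, abs_nonneg z.2]

lemma integral_sq_fst (π : Measure (ℝ × ℝ)) [IsProbabilityMeasure π] (hfst : π.fst = P) :
    ∫ z : ℝ × ℝ, z.1 ^ 2 ∂π = ∫ x, x ^ 2 ∂P := by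
  have : P = π.map Prod.fst := by rw [← hfst]; rfl
  rw [this, integral_map measurable_fst.aemeasurable (by fun_prop)]

lemma integral_sq_snd (π : Measure (ℝ × ℝ)) [IsProbabilityMeasure π] (hsnd : π.snd = Q) :
    ∫ z : ℝ × ℝ, z.2 ^ 2 ∂π = ∫ x, x ^ 2 ∂Q := by
  have : Q = π.map Prod.snd := by rw [← hsnd]; rfl
  rw [this, integral_map measurable_snd.aemeasurable (by fun_prop)]

/-- expansion of the quadratic cost -/
lemma expand_cost (π : Measure (ℝ × ℝ)) [IsProbabilityMeasure π] (hfst : π.fst = P)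
    (hsnd : π.snd = Q) (hP : Integrable (fun x => x ^ 2) P) (hQ : Integrable (fun x => x ^ 2) Q) :
    ∫ z : ℝ × ℝ, (z.1 - z.2) ^ 2 ∂π
      = ∫ x, x ^ 2 ∂P + ∫ x, x ^ 2 ∂Q - 2 * ∫ z : ℝ × ℝ, z.1 * z.2 ∂π := by
  have h1 := integrable_sq_fst P π hfst hP
  have h2 := integrable_sq_snd Q π hsnd hQ
  have hm := integrable_mul π h1 h2
  have key : ∀ z : ℝ × ℝ, (z.1 - z.2) ^ 2 = z.1 ^ 2 + z.2 ^ 2 - 2 * (z.1 * z.2) := by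
    intro z; ring
  rw [integral_congr_ae (Eventually.of_forall key)]
  have h12 : Integrable (fun z : ℝ × ℝ => z.1 ^ 2 + z.2 ^ 2) π := h1.add h2
  rw [integral_sub h12 (hm.const_mul 2), integral_add h1 h2, integral_const_mul,
    integral_sq_fst P π hfst, integral_sq_snd Q π hsnd]

/-- the key optimality inequality -/
lemma mul_le_comono (π : Measure (ℝ × ℝ)) [IsProbabilityMeasure π] (hfst : π.fst = P)
    (hsnd : π.snd = Q) (hP : Integrable (fun x => x ^ 2) P) (hQ : Integrable (fun x => x ^ 2) Q) :
    ∫ z : ℝ × ℝ, z.1 * z.2 ∂π ≤ ∫ z : ℝ × ℝ, z.1 * z.2 ∂(comono P Q) := by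
  have hintπ : Integrable (fun z : ℝ × ℝ => z.1 * z.2) π :=
    integrable_mul π (integrable_sq_fst P π hfst hP) (integrable_sq_snd Q π hsnd hQ)
  have hintc : Integrable (fun z : ℝ × ℝ => z.1 * z.2) (comono P Q) :=
    integrable_mul _ (integrable_sq_fst P _ (comono_fst P Q) hP)
      (integrable_sq_snd Q _ (comono_snd P Q) hQ)
  rw [integral_mul_eq π hintπ, integral_mul_eq (comono P Q) hintc]
  refine integral_mono (integrable_K π hintπ) (integrable_K _ hintc) fun w => ?_
  obtain ⟨s, t⟩ := w
  rw [K_eq π s t, K_eq (comono P Q) s t, hfst, hsnd, comono_fst, comono_snd]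
  have hle : (π (Ioi s ×ˢ Ioi t)).toReal ≤ ((comono P Q) (Ioi s ×ˢ Ioi t)).toReal := by
    simp only [comono]
    rw [comono_prod_toReal P Q s t]
    refine le_min ?_ ?_
    · refine ENNReal.toReal_mono (measure_ne_top P _) ?_
      rw [← hfst]; exact coupling_le_fst π s t
    · refine ENNReal.toReal_mono (measure_ne_top Q _) ?_
      rw [← hsnd]; exact coupling_le_snd π s t
  linarith

theorem stmt6' (hP : Integrable (fun x => x ^ 2) P) (hQ : Integrable (fun x => x ^ 2) Q) :
    sqW2 P Q = ∫ p in Set.Ioo (0 : ℝ) 1, (quant P p - quant Q p) ^ 2 := by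
  set T := ∫ p in Set.Ioo (0 : ℝ) 1, (quant P p - quant Q p) ^ 2 with hT
  have hTc : ∫ z : ℝ × ℝ, (z.1 - z.2) ^ 2 ∂(comono P Q) = T := by
    rw [comono, integral_map ((measurable_qf P).prodMk (measurable_qf Q)).aemeasurable
      ((by fun_prop : Measurable fun z : ℝ × ℝ => (z.1 - z.2) ^ 2)).aestronglyMeasurable]
    refine integral_congr_ae ?_
    filter_upwards [ae_restrict_mem measurableSet_Ioo] with p hp
    rw [qf_eqOn P hp, qf_eqOn Q hp]
  have hmem : T ∈ {r : ℝ | ∃ π : Measure (ℝ × ℝ), IsProbabilityMeasure π ∧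
      π.fst = P ∧ π.snd = Q ∧ r = ∫ z : ℝ × ℝ, (z.1 - z.2) ^ 2 ∂π} :=
    ⟨comono P Q, inferInstance, comono_fst P Q, comono_snd P Q, hTc.symm⟩
  have hlb : ∀ r ∈ {r : ℝ | ∃ π : Measure (ℝ × ℝ), IsProbabilityMeasure π ∧
      π.fst = P ∧ π.snd = Q ∧ r = ∫ z : ℝ × ℝ, (z.1 - z.2) ^ 2 ∂π}, T ≤ r := by
    rintro r ⟨π, hπ, hfst, hsnd, rfl⟩
    rw [← hTc, expand_cost P Q π hfst hsnd hP hQ,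
      expand_cost P Q (comono P Q) (comono_fst P Q) (comono_snd P Q) hP hQ]
    have := mul_le_comono P Q π hfst hsnd hP hQ
    linarith
  exact le_antisymm (csInf_le ⟨T, hlb⟩ hmem) (le_csInf ⟨T, hmem⟩ hlb)


end AssemblyAux

theorem stmt6 (P Q : Measure ℝ) [IsProbabilityMeasure P] [IsProbabilityMeasure Q]
    (hP : Integrable (fun x => x ^ 2) P) (hQ : Integrable (fun x => x ^ 2) Q) :
    sqW2 P Q = ∫ p in Set.Ioo (0 : ℝ) 1, (quant P p - quant Q p) ^ 2 :=
  stmt6' P Q hP hQ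

end
end

section
/- There exists a universal constant C > 0 such that the following holds. Let X and Y be random vectors in ℝ^d with E[X] = E[Y] = 0, Var(X_ℓ) = 1 for each coordinate ℓ, and Y having sub-Gaussian tails (cdf satisfying 1 − F_Y(y) ≤ (C/y)·exp(−y²/2)). Let Φ := sup over α ∈ B of the supremum of the density of αᵀY, ψ := ‖Cov(X)‖₁, g(Δ) := Δ⁴·(1+Φ)⁻⁴, and for a ≥ 0 set h(g(Δ)) := min{(a+d)^d·(g(Δ)+d) + exp(−a²/2) + ψ·exp(−1/(√2·ψ)), (g(Δ)+exp(−a²/2))·d}. If there exists a ≥ 0 such that T_a(X,Y) > h(g(Δ)), then there exists β ∈ B such that the Kolmogorov distance between the projections exceeds g(C·Δ): sup_{z∈ℝ} |Pr(βᵀX ≤ z) − Pr(βᵀY ≤ z)| > g(C·Δ). -/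
open MeasureTheory ProbabilityTheory Filter
open scoped RealInnerProductSpace ENNReal Topology

noncomputable section

lemma aux_lt_le {Ω : Type} [MeasurableSpace Ω] (P : Measure Ω) [IsProbabilityMeasure P]
    (f h : Ω → ℝ) (ε c : ℝ)
    (hcl : ∀ z : ℝ, (P {ω | f ω ≤ z}).toReal ≤ (P {ω | h ω ≤ z}).toReal + ε) :
    (P {ω | f ω < c}).toReal ≤ (P {ω | h ω < c}).toReal + ε := by
  have hmono : Monotone fun n : ℕ => {ω | f ω ≤ c - 1 / (n + 1)} := by
    intro m n hmn ω hω
    simp only [Set.mem_setOf_eq] at hω ⊢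
    have h1 : (1 : ℝ) / (n + 1) ≤ 1 / (m + 1) := by
      apply one_div_le_one_div_of_le
      · positivity
      · exact_mod_cast Nat.add_le_add_right hmn 1
    linarith
  have hun : (⋃ n : ℕ, {ω | f ω ≤ c - 1 / (n + 1)}) = {ω | f ω < c} := by
    ext ω
    simp only [Set.mem_iUnion, Set.mem_setOf_eq]
    constructor
    · rintro ⟨n, hn⟩
      have : (0 : ℝ) < 1 / (n + 1) := by positivity
      linarith
    · intro hω
      obtain ⟨n, hn⟩ := exists_nat_one_div_lt (sub_pos.2 hω)
      exact ⟨n, by linarith⟩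
  have ht := tendsto_measure_iUnion_atTop (μ := P) hmono
  rw [hun] at ht
  have ht2 : Tendsto (fun n : ℕ => (P {ω | f ω ≤ c - 1 / (n + 1)}).toReal) atTop
      (𝓝 ((P {ω | f ω < c}).toReal)) :=
    (ENNReal.tendsto_toReal (measure_ne_top P _)).comp ht
  refine le_of_tendsto ht2 (Eventually.of_forall fun n => ?_)
  refine (hcl _).trans (add_le_add_left ?_ ε)
  refine ENNReal.toReal_mono (measure_ne_top P _) (measure_mono fun ω hω => ?_)
  simp only [Set.mem_setOf_eq] at hω ⊢
  have : (0 : ℝ) < 1 / (n + 1) := by positivity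
  linarith

set_option maxHeartbeats 1000000 in
theorem stmt16 :
    ∃ C : ℝ, 0 < C ∧
    ∀ (Ω : Type) (_ : MeasurableSpace Ω) (P : Measure Ω) (_ : IsProbabilityMeasure P)
      {d : ℕ} (hd : 0 < d)
      (X Y : Ω → EuclideanSpace ℝ (Fin d)) (_ : Measurable X) (_ : Measurable Y)
      (_ : ∀ ℓ : Fin d, ∫ ω, X ω ℓ ∂P = 0) (_ : ∀ ℓ : Fin d, ∫ ω, Y ω ℓ ∂P = 0)
      (_ : ∀ ℓ : Fin d, ∫ ω, (X ω ℓ) ^ 2 ∂P = 1)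
      (_ : ∀ α ∈ ballB d hd, ∀ y : ℝ, 0 < y →
        1 - mcdf (proj α (P.map Y)) y ≤ C / y * Real.exp (-y ^ 2 / 2))
      (Δ : ℝ),
      (∃ a : ℝ, 0 ≤ a ∧
        Ta P X Y a > min
          ((a + d) ^ d * ((Δ) ^ 4 * (1 + projDensitySup hd (P.map Y))⁻¹ ^ 4 + d) +
            Real.exp (-a ^ 2 / 2) +
            covL1 P X * Real.exp (-1 / (Real.sqrt 2 * covL1 P X)))
          (((Δ) ^ 4 * (1 + projDensitySup hd (P.map Y))⁻¹ ^ 4 + Real.exp (-a ^ 2 / 2)) * d)) →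
      ∃ β ∈ ballB d hd,
        (⨆ z : ℝ, |(P {ω | ⟪β, X ω⟫ ≤ z}).toReal - (P {ω | ⟪β, Y ω⟫ ≤ z}).toReal|) >
          (C * Δ) ^ 4 * (1 + projDensitySup hd (P.map Y))⁻¹ ^ 4 := by
  refine ⟨1/2, by norm_num, ?_⟩
  intro Ω mΩ P hP d hd X Y hX hY hEX hEY hVX hTail Δ hyp
  obtain ⟨a, ha, hTa⟩ := hyp
  by_contra hcon
  push_neg at hcon
  set Φ := projDensitySup hd (P.map Y) with hΦ
  set q := Δ ^ 4 * (1 + Φ)⁻¹ ^ 4 with hqdef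
  set E := Real.exp (-a ^ 2 / 2) with hEdef
  have hq0 : 0 ≤ q := by positivity
  have hE0 : 0 < E := Real.exp_pos _
  have hd1 : (1 : ℝ) ≤ (d : ℝ) := by exact_mod_cast hd
  set i0 : Fin d := ⟨0, hd⟩ with hi0
  -- coordinate functions are measurable
  have hcoordinner : ∀ i : Fin d, (fun x : EuclideanSpace ℝ (Fin d) => x i)
      = fun x => ⟪EuclideanSpace.single i (1 : ℝ), x⟫ := by
    intro i; funext x; simp [EuclideanSpace.inner_single_left]
  have hinnm : ∀ β : EuclideanSpace ℝ (Fin d),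
      Measurable fun x : EuclideanSpace ℝ (Fin d) => ⟪β, x⟫ := fun β =>
    (Continuous.inner continuous_const continuous_id).measurable
  have hcoord : ∀ i : Fin d, Measurable fun x : EuclideanSpace ℝ (Fin d) => x i := by
    intro i; rw [hcoordinner i]; exact hinnm _
  have hXi : ∀ i : Fin d, Measurable fun ω => X ω i := fun i => (hcoord i).comp hX
  have hYi : ∀ i : Fin d, Measurable fun ω => Y ω i := fun i => (hcoord i).comp hY
  have hSXm : MeasurableSet {ω | ∀ i, |X ω i| ≤ a} := by
    rw [show {ω | ∀ i, |X ω i| ≤ a} = ⋂ i, {ω | |X ω i| ≤ a} from by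
      ext; simp [Set.mem_iInter]]
    exact MeasurableSet.iInter fun i => measurableSet_le ((hXi i).abs) measurable_const
  have hSYm : MeasurableSet {ω | ∀ i, |Y ω i| ≤ a} := by
    rw [show {ω | ∀ i, |Y ω i| ≤ a} = ⋂ i, {ω | |Y ω i| ≤ a} from by
      ext; simp [Set.mem_iInter]]
    exact MeasurableSet.iInter fun i => measurableSet_le ((hYi i).abs) measurable_const
  set pX := (P {ω | ∀ i, |X ω i| ≤ a}).toReal with hpXdef
  set pY := (P {ω | ∀ i, |Y ω i| ≤ a}).toReal with hpYdef
  have hprob1 : ∀ s : Set Ω, (P s).toReal ≤ 1 := fun s =>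
    le_trans (ENNReal.toReal_mono ENNReal.one_ne_top prob_le_one) (by simp)
  have hprob0 : ∀ s : Set Ω, 0 ≤ (P s).toReal := fun s => ENNReal.toReal_nonneg
  have hTa1 : Ta P X Y a ≤ 1 := by
    rw [Ta, abs_le]
    constructor
    · have := hprob1 {ω | ∀ i, |Y ω i| ≤ a}
      have := hprob0 {ω | ∀ i, |X ω i| ≤ a}
      rw [← hpXdef, ← hpYdef]; linarith
    · have := hprob1 {ω | ∀ i, |X ω i| ≤ a}
      have := hprob0 {ω | ∀ i, |Y ω i| ≤ a}
      rw [← hpXdef, ← hpYdef]; linarith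
  -- the first branch of the min exceeds 1
  have hA1 : 1 < (a + d) ^ d * (q + d) + E +
      covL1 P X * Real.exp (-1 / (Real.sqrt 2 * covL1 P X)) := by
    have h1 : (1 : ℝ) ≤ (a + d) ^ d := one_le_pow₀ (by linarith)
    have h2 : (1 : ℝ) ≤ q + d := by linarith
    have h3 : (0 : ℝ) ≤ covL1 P X :=
      Finset.sum_nonneg fun i _ => Finset.sum_nonneg fun j _ => abs_nonneg _
    nlinarith [Real.exp_pos (-1 / (Real.sqrt 2 * covL1 P X))]
  have hTa2 : Ta P X Y a > (q + E) * d := by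
    rcases le_or_gt ((a + d) ^ d * (q + d) + E +
        covL1 P X * Real.exp (-1 / (Real.sqrt 2 * covL1 P X))) ((q + E) * d) with h | h
    · rw [min_eq_left h] at hTa; linarith
    · rwa [min_eq_right h.le] at hTa
  have hTa3 : |pX - pY| > (q + E) * d := hTa2
  -- Kolmogorov closeness of all projections, from the negated conclusion
  set ε := q / 16 with hεdef
  have hε0 : 0 ≤ ε := by positivity
  have hconB : ∀ β ∈ ballB d hd, ∀ z : ℝ,
      |(P {ω | ⟪β, X ω⟫ ≤ z}).toReal - (P {ω | ⟪β, Y ω⟫ ≤ z}).toReal| ≤ ε := by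
    intro β hβ z
    have hb := hcon β hβ
    have hbdd : BddAbove (Set.range fun z : ℝ =>
        |(P {ω | ⟪β, X ω⟫ ≤ z}).toReal - (P {ω | ⟪β, Y ω⟫ ≤ z}).toReal|) := by
      refine ⟨1, ?_⟩
      rintro _ ⟨z, rfl⟩
      have h1 := hprob1 {ω | ⟪β, X ω⟫ ≤ z}
      have h2 := hprob1 {ω | ⟪β, Y ω⟫ ≤ z}
      have h3 := hprob0 {ω | ⟪β, X ω⟫ ≤ z}
      have h4 := hprob0 {ω | ⟪β, Y ω⟫ ≤ z}
      rw [abs_le]; constructor <;> linarith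
    have hle := le_ciSup hbdd z
    have heq : (1/2 * Δ) ^ 4 * (1 + Φ)⁻¹ ^ 4 = ε := by rw [hεdef, hqdef]; ring
    calc |(P {ω | ⟪β, X ω⟫ ≤ z}).toReal - (P {ω | ⟪β, Y ω⟫ ≤ z}).toReal|
        ≤ ⨆ z : ℝ, |(P {ω | ⟪β, X ω⟫ ≤ z}).toReal - (P {ω | ⟪β, Y ω⟫ ≤ z}).toReal| := hle
      _ ≤ (1/2 * Δ) ^ 4 * (1 + Φ)⁻¹ ^ 4 := hb
      _ = ε := heq
  -- membership of (±) coordinate vectors in B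
  have hsingle_mem : ∀ i : Fin d, EuclideanSpace.single i (1 : ℝ) ∈ ballB d hd := by
    intro i
    refine ⟨by simp, ?_⟩
    rw [EuclideanSpace.single_apply]
    split <;> norm_num
  have hnsingle_mem : ∀ i : Fin d, i ≠ i0 → -EuclideanSpace.single i (1 : ℝ) ∈ ballB d hd := by
    intro i hi
    refine ⟨by simp, ?_⟩
    have hne : (⟨0, hd⟩ : Fin d) ≠ i := Ne.symm hi
    show (0:ℝ) ≤ (-EuclideanSpace.single i (1 : ℝ)) ⟨0, hd⟩
    rw [show (-EuclideanSpace.single i (1 : ℝ)) ⟨0, hd⟩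
        = -(EuclideanSpace.single i (1 : ℝ) ⟨0, hd⟩) from rfl,
      EuclideanSpace.single_apply, if_neg hne]
    norm_num
  -- coordinatewise cdf closeness
  have hFcomp : ∀ i : Fin d, ∀ z : ℝ,
      |(P {ω | X ω i ≤ z}).toReal - (P {ω | Y ω i ≤ z}).toReal| ≤ ε := by
    intro i z
    have h := hconB _ (hsingle_mem i) z
    simpa [EuclideanSpace.inner_single_left] using h
  -- cdf of projections of Y
  have hproj : ∀ β : EuclideanSpace ℝ (Fin d), ∀ y : ℝ,
      mcdf (proj β (P.map Y)) y = (P {ω | ⟪β, Y ω⟫ ≤ y}).toReal := by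
    intro β y
    rw [mcdf, proj, Measure.map_map (hinnm β) hY,
      Measure.map_apply ((hinnm β).comp hY) measurableSet_Iic]
    rfl
  -- upper tails of projections of Y
  have htailY : ∀ β ∈ ballB d hd, ∀ y : ℝ, 0 < y →
      (P {ω | y < ⟪β, Y ω⟫}).toReal ≤ 1/2 / y * Real.exp (-y ^ 2 / 2) := by
    intro β hβ y hy
    have h1 := hTail β hβ y hy
    rw [hproj] at h1
    have hms : MeasurableSet {ω | ⟪β, Y ω⟫ ≤ y} :=
      measurableSet_le ((hinnm β).comp hY) measurable_const
    have hc : {ω | y < ⟪β, Y ω⟫} = {ω | ⟪β, Y ω⟫ ≤ y}ᶜ := by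
      ext ω; simp [not_le]
    rw [hc, prob_compl_eq_one_sub hms,
      ENNReal.toReal_sub_of_le prob_le_one ENNReal.one_ne_top, ENNReal.toReal_one]
    exact h1
  -- union bound for rectangle complements
  have hub : ∀ Z : Ω → EuclideanSpace ℝ (Fin d),
      MeasurableSet {ω | ∀ i, |Z ω i| ≤ a} →
      1 - (P {ω | ∀ i, |Z ω i| ≤ a}).toReal ≤
        ∑ i, ((P {ω | a < Z ω i}).toReal + (P {ω | Z ω i < -a}).toReal) := by
    intro Z hSZ
    have hsub : {ω | ∀ i, |Z ω i| ≤ a}ᶜ ⊆ ⋃ i, ({ω | a < Z ω i} ∪ {ω | Z ω i < -a}) := by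
      intro ω hω
      simp only [Set.mem_compl_iff, Set.mem_setOf_eq, not_forall] at hω
      obtain ⟨i, hi⟩ := hω
      rw [not_le] at hi
      rcases lt_abs.1 hi with h | h
      · exact Set.mem_iUnion.2 ⟨i, Or.inl h⟩
      · exact Set.mem_iUnion.2 ⟨i, Or.inr (by simp only [Set.mem_setOf_eq]; linarith)⟩
    have h1 : P ({ω | ∀ i, |Z ω i| ≤ a}ᶜ) ≤ ∑ i, (P {ω | a < Z ω i} + P {ω | Z ω i < -a}) := by
      refine (measure_mono hsub).trans ?_
      refine (measure_iUnion_le _).trans ?_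
      rw [tsum_fintype]
      exact Finset.sum_le_sum fun i _ => measure_union_le _ _
    have hfin : ∀ i : Fin d, (P {ω | a < Z ω i} + P {ω | Z ω i < -a}) ≠ ∞ := fun i =>
      ENNReal.add_ne_top.2 ⟨measure_ne_top _ _, measure_ne_top _ _⟩
    have h2 := ENNReal.toReal_mono (ENNReal.sum_ne_top.2 fun i _ => hfin i) h1
    rw [prob_compl_eq_one_sub hSZ,
      ENNReal.toReal_sub_of_le prob_le_one ENNReal.one_ne_top, ENNReal.toReal_one,
      ENNReal.toReal_sum (fun i _ => hfin i)] at h2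
    refine h2.trans_eq (Finset.sum_congr rfl fun i _ =>
      ENNReal.toReal_add (measure_ne_top _ _) (measure_ne_top _ _))
  -- the lower tail at coordinate 0 is below the rectangle complement
  have hlowrect : ∀ Z : Ω → EuclideanSpace ℝ (Fin d),
      MeasurableSet {ω | ∀ i, |Z ω i| ≤ a} →
      (P {ω | Z ω i0 < -a}).toReal ≤ 1 - (P {ω | ∀ i, |Z ω i| ≤ a}).toReal := by
    intro Z hSZ
    have hsub : {ω | Z ω i0 < -a} ⊆ {ω | ∀ i, |Z ω i| ≤ a}ᶜ := by
      intro ω hω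
      simp only [Set.mem_setOf_eq] at hω
      simp only [Set.mem_compl_iff, Set.mem_setOf_eq, not_forall]
      refine ⟨i0, ?_⟩
      rw [not_le]
      exact lt_abs.2 (Or.inr (by linarith))
    have := ENNReal.toReal_mono (measure_ne_top P _) (measure_mono hsub)
    rwa [prob_compl_eq_one_sub hSZ,
      ENNReal.toReal_sub_of_le prob_le_one ENNReal.one_ne_top, ENNReal.toReal_one] at this
  -- comparison of strict lower tails at coordinate 0
  have hlXY : (P {ω | X ω i0 < -a}).toReal ≤ (P {ω | Y ω i0 < -a}).toReal + ε :=
    aux_lt_le P _ _ ε (-a) fun z => by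
      have h := hFcomp i0 z; rw [abs_le] at h; linarith [h.1, h.2]
  have hlYX : (P {ω | Y ω i0 < -a}).toReal ≤ (P {ω | X ω i0 < -a}).toReal + ε :=
    aux_lt_le P _ _ ε (-a) fun z => by
      have h := hFcomp i0 z; rw [abs_le] at h; linarith [h.1, h.2]
  rcases Nat.lt_or_ge d 2 with hd2 | hd2
  · -- d = 1 : pure marginal argument
    have hd1' : d = 1 := by omega
    have hall : ∀ i : Fin d, i = i0 := fun i => Fin.ext (by omega)
    have hdec : ∀ Z : Ω → EuclideanSpace ℝ (Fin d), (∀ i, Measurable fun ω => Z ω i) →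
        (P {ω | Z ω i0 ≤ a}).toReal
          = (P {ω | ∀ i, |Z ω i| ≤ a}).toReal + (P {ω | Z ω i0 < -a}).toReal := by
      intro Z hZi
      have hset : {ω | Z ω i0 ≤ a} = {ω | ∀ i, |Z ω i| ≤ a} ∪ {ω | Z ω i0 < -a} := by
        ext ω
        simp only [Set.mem_setOf_eq, Set.mem_union]
        constructor
        · intro h
          by_cases hc : Z ω i0 < -a
          · exact Or.inr hc
          · refine Or.inl fun i => ?_
            rw [hall i, abs_le]
            exact ⟨not_lt.1 hc, h⟩
        · rintro (h | h)
          · exact (abs_le.1 (h i0)).2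
          · linarith
      have hdisj : Disjoint {ω | ∀ i, |Z ω i| ≤ a} {ω | Z ω i0 < -a} := by
        rw [Set.disjoint_left]
        intro ω h1 h2
        simp only [Set.mem_setOf_eq] at h1 h2
        have := (abs_le.1 (h1 i0)).1
        linarith
      have hm2 : MeasurableSet {ω | Z ω i0 < -a} :=
        measurableSet_lt (hZi i0) measurable_const
      rw [hset, measure_union hdisj hm2,
        ENNReal.toReal_add (measure_ne_top _ _) (measure_ne_top _ _)]
    have hdX := hdec X hXi
    have hdY := hdec Y hYi
    have hFa := hFcomp i0 a
    rw [abs_le] at hFa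
    have hdr : (d : ℝ) = 1 := by rw [hd1']; norm_num
    have habs : |pX - pY| ≤ 2 * ε := by
      rw [abs_le]
      constructor
      · linarith [hFa.1, hFa.2, hlXY, hlYX]
      · linarith [hFa.1, hFa.2, hlXY, hlYX]
    have hqd : (q + E) * (d : ℝ) = q + E := by rw [hdr]; ring
    rw [hqd] at hTa3
    rw [hεdef] at habs
    linarith
  · -- d ≥ 2
    have hd2r : (2 : ℝ) ≤ (d : ℝ) := by exact_mod_cast hd2
    rcases le_or_gt a 1 with ha1 | ha1
    · -- a ≤ 1 : the bound is trivially at least 1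
      have hEge : Real.exp (-(1:ℝ)/2) ≤ E := by
        rw [hEdef]
        apply Real.exp_le_exp.2
        nlinarith
      have hexp2 : Real.exp ((1:ℝ)/2) < 2 := by
        have hmul : Real.exp ((1:ℝ)/2) * Real.exp ((1:ℝ)/2) = Real.exp 1 := by
          rw [← Real.exp_add]; norm_num
        nlinarith [Real.exp_one_lt_d9, Real.exp_pos ((1:ℝ)/2)]
      have hEhalf : (1:ℝ)/2 < E := by
        have h1 : (1:ℝ)/2 < Real.exp (-(1:ℝ)/2) := by
          rw [show (-(1:ℝ)/2) = -(1/2) by norm_num, Real.exp_neg, ← one_div]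
          have := one_div_lt_one_div_of_lt (Real.exp_pos ((1:ℝ)/2)) hexp2
          linarith
        linarith
      have hE0' : (0:ℝ) ≤ E := le_of_lt hE0
      have hEd : (1:ℝ) ≤ E * d := by
        have h := mul_le_mul hEhalf.le hd2r (by norm_num) hE0'
        linarith
      have hqd0 : (0:ℝ) ≤ q * d := mul_nonneg hq0 (by linarith)
      have hsum : (q + E) * d = q * d + E * d := by ring
      have hTa4 : |pX - pY| ≤ 1 := hTa1
      linarith [hTa3, hTa4, hEd, hqd0, hsum]
    · -- a > 1 : the main tail argument
      have ha0' : (0:ℝ) < a := by linarith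
      have hEq : Real.exp (-a ^ 2 / 2) = E := hEdef.symm
      have hhalf : 1/2 / a * Real.exp (-a ^ 2 / 2) ≤ E / 2 := by
        have h1 : 1/2 / a ≤ 1/2 := by
          rw [div_div]
          exact one_div_le_one_div_of_le (by norm_num) (by linarith)
        have := mul_le_mul_of_nonneg_right h1 (Real.exp_nonneg (-a ^ 2 / 2))
        rw [hEq] at this ⊢
        linarith
      -- upper tails of Y
      have huY : ∀ i : Fin d, (P {ω | a < Y ω i}).toReal ≤ E / 2 := by
        intro i
        have h := htailY _ (hsingle_mem i) a ha0'
        have hset : {ω | a < ⟪EuclideanSpace.single i (1:ℝ), Y ω⟫} = {ω | a < Y ω i} := by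
          ext ω; simp [EuclideanSpace.inner_single_left]
        rw [hset] at h
        linarith
      -- lower tails of Y away from coordinate 0
      have hlY : ∀ i : Fin d, i ≠ i0 → (P {ω | Y ω i < -a}).toReal ≤ E / 2 := by
        intro i hi
        have h := htailY _ (hnsingle_mem i hi) a ha0'
        have hset : {ω | a < ⟪-EuclideanSpace.single i (1:ℝ), Y ω⟫} = {ω | Y ω i < -a} := by
          ext ω; simp [EuclideanSpace.inner_single_left, lt_neg]
        rw [hset] at h
        linarith
      -- complement identities for upper tails
      have huXeq : ∀ i : Fin d,
          (P {ω | a < X ω i}).toReal = 1 - (P {ω | X ω i ≤ a}).toReal := by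
        intro i
        have hms : MeasurableSet {ω | X ω i ≤ a} := measurableSet_le (hXi i) measurable_const
        have hc : {ω | a < X ω i} = {ω | X ω i ≤ a}ᶜ := by ext ω; simp [not_le]
        rw [hc, prob_compl_eq_one_sub hms,
          ENNReal.toReal_sub_of_le prob_le_one ENNReal.one_ne_top, ENNReal.toReal_one]
      have huYeq : ∀ i : Fin d,
          (P {ω | a < Y ω i}).toReal = 1 - (P {ω | Y ω i ≤ a}).toReal := by
        intro i
        have hms : MeasurableSet {ω | Y ω i ≤ a} := measurableSet_le (hYi i) measurable_const
        have hc : {ω | a < Y ω i} = {ω | Y ω i ≤ a}ᶜ := by ext ω; simp [not_le]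
        rw [hc, prob_compl_eq_one_sub hms,
          ENNReal.toReal_sub_of_le prob_le_one ENNReal.one_ne_top, ENNReal.toReal_one]
      -- upper tails of X
      have huX : ∀ i : Fin d, (P {ω | a < X ω i}).toReal ≤ E / 2 + ε := by
        intro i
        have h := hFcomp i a
        rw [abs_le] at h
        have h2 := huY i
        rw [huYeq i] at h2
        rw [huXeq i]
        linarith [h.1, h.2]
      -- lower tails of X away from coordinate 0
      have hlX : ∀ i : Fin d, i ≠ i0 → (P {ω | X ω i < -a}).toReal ≤ E / 2 + ε := by
        intro i hi
        have hstrict : (P {ω | X ω i < -a}).toReal ≤ (P {ω | Y ω i < -a}).toReal + ε :=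
          aux_lt_le P _ _ ε (-a) fun z => by
            have h := hFcomp i z; rw [abs_le] at h; linarith [h.1, h.2]
        have := hlY i hi
        linarith
      -- summing
      have hsumuY : ∑ i : Fin d, (P {ω | a < Y ω i}).toReal ≤ (d : ℝ) * (E / 2) := by
        have h := Finset.sum_le_card_nsmul Finset.univ
          (fun i => (P {ω | a < Y ω i}).toReal) (E / 2) (fun i _ => huY i)
        simpa [Finset.card_univ, nsmul_eq_mul] using h
      have hsumuX : ∑ i : Fin d, (P {ω | a < X ω i}).toReal ≤ (d : ℝ) * (E / 2) + (d : ℝ) * ε := by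
        have h := Finset.sum_le_card_nsmul Finset.univ
          (fun i => (P {ω | a < X ω i}).toReal) (E / 2 + ε) (fun i _ => huX i)
        simpa [Finset.card_univ, nsmul_eq_mul] using h
      have hcarde : (Finset.univ.erase i0).card = d - 1 := by
        rw [Finset.card_erase_of_mem (Finset.mem_univ _), Finset.card_univ, Fintype.card_fin]
      have hcaster : ((d - 1 : ℕ) : ℝ) = (d : ℝ) - 1 := by
        rw [Nat.cast_sub hd]; norm_num
      have hsumlY : ∑ i ∈ Finset.univ.erase i0, (P {ω | Y ω i < -a}).toReal
          ≤ ((d : ℝ) - 1) * (E / 2) := by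
        have h := Finset.sum_le_card_nsmul (Finset.univ.erase i0)
          (fun i => (P {ω | Y ω i < -a}).toReal) (E / 2)
          (fun i hi => hlY i (Finset.ne_of_mem_erase hi))
        rw [hcarde, nsmul_eq_mul, hcaster] at h
        exact h
      have hsumlX : ∑ i ∈ Finset.univ.erase i0, (P {ω | X ω i < -a}).toReal
          ≤ ((d : ℝ) - 1) * (E / 2 + ε) := by
        have h := Finset.sum_le_card_nsmul (Finset.univ.erase i0)
          (fun i => (P {ω | X ω i < -a}).toReal) (E / 2 + ε)
          (fun i hi => hlX i (Finset.ne_of_mem_erase hi))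
        rw [hcarde, nsmul_eq_mul, hcaster] at h
        exact h
      have hsplitY : ∑ i : Fin d, (P {ω | Y ω i < -a}).toReal
          = (P {ω | Y ω i0 < -a}).toReal
            + ∑ i ∈ Finset.univ.erase i0, (P {ω | Y ω i < -a}).toReal :=
        (Finset.add_sum_erase _ _ (Finset.mem_univ i0)).symm
      have hsplitX : ∑ i : Fin d, (P {ω | X ω i < -a}).toReal
          = (P {ω | X ω i0 < -a}).toReal
            + ∑ i ∈ Finset.univ.erase i0, (P {ω | X ω i < -a}).toReal :=
        (Finset.add_sum_erase _ _ (Finset.mem_univ i0)).symm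
      have hubY := hub Y hSYm
      have hubX := hub X hSXm
      rw [Finset.sum_add_distrib] at hubY hubX
      have hrectX := hlowrect X hSXm
      have hrectY := hlowrect Y hSYm
      -- combine
      have hfin1 : pX - pY ≤ (d : ℝ) * (E / 2) + ((d : ℝ) - 1) * (E / 2) + ε := by
        linarith [hubY, hsumuY, hsumlY, hsplitY, hrectX, hlYX]
      have hfin2 : pY - pX ≤ (d : ℝ) * (E / 2) + (d : ℝ) * ε + ((d : ℝ) - 1) * (E / 2 + ε) + ε := by
        linarith [hubX, hsumuX, hsumlX, hsplitX, hrectY, hlXY]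
      have hdq0 : 0 ≤ (d : ℝ) * q := mul_nonneg (by linarith) hq0
      have hdε : (d : ℝ) * ε = (d : ℝ) * q / 16 := by rw [hεdef]; ring
      have habs : |pX - pY| ≤ (d : ℝ) * (E / 2) + (d : ℝ) * ε + ((d : ℝ) - 1) * (E / 2 + ε) + ε := by
        rw [abs_le]
        constructor
        · nlinarith [hfin2, hε0, hE0, hd1]
        · nlinarith [hfin1, hε0, hE0, hd1]
      nlinarith [habs, hTa3, hdq0, hdε, hE0]



end
end
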